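/- arXiv:2202.07514 — 6 statements merged into one kernel-verified Lean document; each statement's English description precedes it below -/
import Mathlib

section
/- For every integer n ≥ 3 and all sign assignments a₁,…,aₙ, b₁,…,bₙ ∈ {−1, 1}, one has C(n−1, 2) · Σ_{i=1}^{n} aᵢ · Π_{j≠i} bⱼ − Σ_{1 ≤ i < j < k ≤ n} aᵢ aⱼ a_k · Π_{m∉{i,j,k}} b_m ≤ 2 · C(n, 3). -/
open Finset

lemma card_filter_mem_powersetCard {n : ℕ} (i : Fin n) :
    ((Finset.powersetCard 3 (Finset.univ : Finset (Fin n))).filter (fun S => i ∈ S)).card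
      = (n - 1).choose 2 := by
  have h : ((Finset.powersetCard 3 (Finset.univ : Finset (Fin n))).filter
      (fun S => i ∈ S)).card
      = (Finset.powersetCard 2 ((Finset.univ : Finset (Fin n)).erase i)).card := by
    refine Finset.card_nbij' (fun S => S.erase i) (fun T => insert i T) ?_ ?_ ?_ ?_
    · intro S hS
      simp only [Finset.mem_coe, mem_filter, Finset.mem_powersetCard] at hS
      obtain ⟨⟨-, hcard⟩, hi⟩ := hS
      simp only [Finset.mem_coe, Finset.mem_powersetCard]
      constructor
      · intro x hx
        simp only [Finset.mem_erase] at hx ⊢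
        exact ⟨hx.1, Finset.mem_univ x⟩
      · rw [Finset.card_erase_of_mem hi, hcard]
    · intro T hT
      simp only [Finset.mem_coe, Finset.mem_powersetCard] at hT
      obtain ⟨hsub, hcard⟩ := hT
      have hiT : i ∉ T := fun h => (Finset.mem_erase.1 (hsub h)).1 rfl
      simp only [Finset.mem_coe, mem_filter, Finset.mem_powersetCard]
      refine ⟨⟨fun x _ => Finset.mem_univ x, ?_⟩, Finset.mem_insert_self i T⟩
      rw [Finset.card_insert_of_notMem hiT, hcard]
    · intro S hS
      simp only [Finset.mem_coe, mem_filter] at hS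
      exact Finset.insert_erase hS.2
    · intro T hT
      simp only [Finset.mem_coe, Finset.mem_powersetCard] at hT
      have hiT : i ∉ T := fun h => (Finset.mem_erase.1 (hT.1 h)).1 rfl
      exact Finset.erase_insert hiT
  rw [h, Finset.card_powersetCard, Finset.card_erase_of_mem (Finset.mem_univ i),
    Finset.card_univ, Fintype.card_fin]

lemma triple_bound {n : ℕ} (a b : Fin n → ℝ)
    (ha : ∀ i, a i = 1 ∨ a i = -1) (hb : ∀ i, b i = 1 ∨ b i = -1)
    (S : Finset (Fin n)) (hS : S ∈ Finset.powersetCard 3 (Finset.univ : Finset (Fin n))) :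
    (∑ i ∈ S, a i * ∏ j ∈ Finset.univ.erase i, b j)
      - (∏ i ∈ S, a i) * ∏ m ∈ Sᶜ, b m ≤ 2 := by
  simp only [Finset.mem_powersetCard] at hS
  obtain ⟨i, j, k, hij, hik, hjk, rfl⟩ := Finset.card_eq_three.1 hS.2
  set P : ℝ := ∏ m, b m with hP
  have herase : ∀ m : Fin n, ∏ l ∈ Finset.univ.erase m, b l = b m * P := by
    intro m
    have h1 : b m * ∏ l ∈ Finset.univ.erase m, b l = P :=
      Finset.mul_prod_erase Finset.univ b (Finset.mem_univ m)
    rcases hb m with h | h <;> rw [← h1, h] <;> ring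
  have hprodS : ∏ m ∈ ({i, j, k} : Finset (Fin n)), b m = b i * b j * b k := by
    rw [Finset.prod_insert (by simp [hij, hik]), Finset.prod_insert (by simp [hjk]),
      Finset.prod_singleton]; ring
  have hcompl : ∏ m ∈ ({i, j, k} : Finset (Fin n))ᶜ, b m = b i * b j * b k * P := by
    have h1 : (∏ m ∈ ({i, j, k} : Finset (Fin n)), b m)
        * ∏ m ∈ ({i, j, k} : Finset (Fin n))ᶜ, b m = P :=
      Finset.prod_mul_prod_compl _ b
    rw [hprodS] at h1
    rcases hb i with h | h <;> rcases hb j with h' | h' <;> rcases hb k with h'' | h'' <;>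
      rw [← h1, h, h', h''] <;> ring
  have hsum : ∑ m ∈ ({i, j, k} : Finset (Fin n)), a m * ∏ l ∈ Finset.univ.erase m, b l
      = a i * (b i * P) + a j * (b j * P) + a k * (b k * P) := by
    rw [Finset.sum_insert (by simp [hij, hik]), Finset.sum_insert (by simp [hjk]),
      Finset.sum_singleton, herase i, herase j, herase k]; ring
  have hprodA : ∏ m ∈ ({i, j, k} : Finset (Fin n)), a m = a i * a j * a k := by
    rw [Finset.prod_insert (by simp [hij, hik]), Finset.prod_insert (by simp [hjk]),
      Finset.prod_singleton]; ring
  have hP1 : P = 1 ∨ P = -1 := by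
    rw [← mul_self_eq_one_iff, hP, ← Finset.prod_mul_distrib]
    apply Finset.prod_eq_one
    intro m _
    rcases hb m with h | h <;> rw [h] <;> norm_num
  rw [hsum, hprodA, hcompl]
  rcases ha i with h1 | h1 <;> rcases ha j with h2 | h2 <;> rcases ha k with h3 | h3 <;>
    rcases hb i with h4 | h4 <;> rcases hb j with h5 | h5 <;> rcases hb k with h6 | h6 <;>
    rcases hP1 with h7 | h7 <;>
    rw [h1, h2, h3, h4, h5, h6, h7] <;> norm_num

/-- classical (noncontextual) bound of the scalable
noncontextuality expression `Iₙ`.  For every `n ≥ 3` and all sign assignments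
`aᵢ, bⱼ ∈ {−1, 1}`,
`C(n−1,2) · Σᵢ aᵢ Π_{j≠i} bⱼ − Σ_{i<j<k} aᵢaⱼa_k Π_{m∉{i,j,k}} b_m ≤ 2·C(n,3)`.
The sum over triples `1 ≤ i < j < k ≤ n` is expressed as a sum over the
three-element subsets `S` of `{1,…,n}`. -/
theorem stmt0 (n : ℕ) (hn : 3 ≤ n) (a b : Fin n → ℝ)
    (ha : ∀ i, a i = 1 ∨ a i = -1) (hb : ∀ i, b i = 1 ∨ b i = -1) :
    ((n - 1).choose 2 : ℝ) * ∑ i, a i * ∏ j ∈ Finset.univ.erase i, b j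
      - ∑ S ∈ Finset.powersetCard 3 (Finset.univ : Finset (Fin n)),
          (∏ i ∈ S, a i) * ∏ m ∈ Sᶜ, b m
      ≤ 2 * (n.choose 3 : ℝ) := by
  set x : Fin n → ℝ := fun i => a i * ∏ j ∈ Finset.univ.erase i, b j with hx
  have swap : ((n - 1).choose 2 : ℝ) * ∑ i, x i
      = ∑ S ∈ Finset.powersetCard 3 (Finset.univ : Finset (Fin n)), ∑ i ∈ S, x i := by
    calc ((n - 1).choose 2 : ℝ) * ∑ i, x i
        = ∑ i, ((n - 1).choose 2 : ℝ) * x i := by rw [Finset.mul_sum]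
      _ = ∑ i, ∑ S ∈ (Finset.powersetCard 3 (Finset.univ : Finset (Fin n))).filter
            (fun S => i ∈ S), x i := by
          refine Finset.sum_congr rfl fun i _ => ?_
          rw [Finset.sum_const, card_filter_mem_powersetCard, nsmul_eq_mul]
      _ = ∑ i, ∑ S ∈ Finset.powersetCard 3 (Finset.univ : Finset (Fin n)),
            if i ∈ S then x i else 0 := by
          refine Finset.sum_congr rfl fun i _ => ?_
          rw [Finset.sum_filter]
      _ = ∑ S ∈ Finset.powersetCard 3 (Finset.univ : Finset (Fin n)),
            ∑ i, if i ∈ S then x i else 0 := Finset.sum_comm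
      _ = ∑ S ∈ Finset.powersetCard 3 (Finset.univ : Finset (Fin n)), ∑ i ∈ S, x i := by
          refine Finset.sum_congr rfl fun S _ => ?_
          rw [Finset.sum_ite_mem, Finset.univ_inter]
  rw [swap, ← Finset.sum_sub_distrib]
  have hbound : ∑ S ∈ Finset.powersetCard 3 (Finset.univ : Finset (Fin n)),
      ((∑ i ∈ S, x i) - (∏ i ∈ S, a i) * ∏ m ∈ Sᶜ, b m)
      ≤ ∑ S ∈ Finset.powersetCard 3 (Finset.univ : Finset (Fin n)), (2 : ℝ) :=
    Finset.sum_le_sum fun S hS => triple_bound a b ha hb S hS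
  refine hbound.trans ?_
  rw [Finset.sum_const, nsmul_eq_mul, Finset.card_powersetCard, Finset.card_univ,
    Fintype.card_fin, mul_comm]
end

section
/- Fix an integer n ≥ 3. On (ℂ²)^{⊗n} set Aᵢ = Xᵢ and Bᵢ = Zᵢ for i = 1,…,n, and let ψ be a unit vector satisfying the stabilizer equations Gᵢ ψ = ψ for all i, where Gᵢ = Xᵢ · Π_{j≠i} Zⱼ. Then for every i, ⟨ψ, Aᵢ (Π_{j≠i} Bⱼ) ψ⟩ = 1, and for every triple 1 ≤ i < j < k ≤ n, ⟨ψ, Aᵢ Aⱼ A_k (Π_{m∉{i,j,k}} B_m) ψ⟩ = −1; consequently the expression Iₙ = C(n−1,2) · Σᵢ ⟨ψ, Aᵢ (Π_{j≠i} Bⱼ) ψ⟩ − Σ_{i<j<k} ⟨ψ, Aᵢ Aⱼ A_k (Π_{m∉{i,j,k}} B_m) ψ⟩ attains the value n·C(n−1,2) + C(n,3), the maximal quantum (algebraic) value of Iₙ. -/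
open Matrix

/-- The Pauli matrix `X = !![0, 1; 1, 0]`. -/
noncomputable def PauliX : Matrix (Fin 2) (Fin 2) ℂ := !![0, 1; 1, 0]

/-- The Pauli matrix `Z = !![1, 0; 0, -1]`. -/
noncomputable def PauliZ : Matrix (Fin 2) (Fin 2) ℂ := !![1, 0; 0, -1]

/-- The operator on `(ℂ²)^{⊗n}` (with `(ℂ²)^{⊗n}` realised as matrices indexed by
`Fin n → Fin 2`) acting as the one-qubit matrix `M` on the `i`-th tensor factor and
as the identity on all other factors. -/
noncomputable def tensorFactor (n : ℕ) (M : Matrix (Fin 2) (Fin 2) ℂ) (i : Fin n) :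
    Matrix (Fin n → Fin 2) (Fin n → Fin 2) ℂ :=
  Matrix.of fun f g =>
    M (f i) (g i) * ∏ j ∈ Finset.univ.erase i, (if f j = g j then (1 : ℂ) else 0)

/-- `Xᵢ`: the Pauli `X` acting on the `i`-th qubit. -/
noncomputable def Xop (n : ℕ) (i : Fin n) : Matrix (Fin n → Fin 2) (Fin n → Fin 2) ℂ :=
  tensorFactor n PauliX i

/-- `Zᵢ`: the Pauli `Z` acting on the `i`-th qubit. -/
noncomputable def Zop (n : ℕ) (i : Fin n) : Matrix (Fin n → Fin 2) (Fin n → Fin 2) ℂ :=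
  tensorFactor n PauliZ i

/-- The (matrix) product `Π_{i ∈ S} F i`, multiplied in increasing order of the
index; all products appearing below are over pairwise commuting matrices, so the
order of the factors is irrelevant. -/
noncomputable def matProd {n : ℕ} (F : Fin n → Matrix (Fin n → Fin 2) (Fin n → Fin 2) ℂ)
    (S : Finset (Fin n)) : Matrix (Fin n → Fin 2) (Fin n → Fin 2) ℂ :=
  ((S.sort (· ≤ ·)).map F).prod

/-- The stabilizing operator `Gᵢ = Xᵢ · Π_{j ≠ i} Zⱼ` of the `n`-qubit complete-graph
state. -/
noncomputable def Gop (n : ℕ) (i : Fin n) : Matrix (Fin n → Fin 2) (Fin n → Fin 2) ℂ :=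
  Xop n i * matProd (Zop n) (Finset.univ.erase i)

noncomputable def zsgn (a : Fin 2) : ℂ := if a = 0 then 1 else -1

lemma zsgn_sq (a : Fin 2) : zsgn a * zsgn a = 1 := by fin_cases a <;> simp [zsgn]

lemma zsgn_add_one (a : Fin 2) : zsgn (a + 1) = -zsgn a := by
  fin_cases a <;> simp [zsgn]

lemma pauliX_self (a : Fin 2) : PauliX a a = 0 := by fin_cases a <;> simp [PauliX]
lemma pauliX_succ (a : Fin 2) : PauliX a (a + 1) = 1 := by fin_cases a <;> simp [PauliX]
lemma pauliZ_self (a : Fin 2) : PauliZ a a = zsgn a := by fin_cases a <;> simp [PauliZ, zsgn]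
lemma pauliZ_ne (a b : Fin 2) (h : a ≠ b) : PauliZ a b = 0 := by
  fin_cases a <;> fin_cases b <;> simp [PauliZ] <;> simp_all

lemma fin2_eq_of_ne_succ (a b : Fin 2) (h : b ≠ a + 1) : b = a := by omega

lemma Xop_mulVec (n : ℕ) (i : Fin n) (ψ : (Fin n → Fin 2) → ℂ) (f : Fin n → Fin 2) :
    (Xop n i).mulVec ψ f = ψ (Function.update f i (f i + 1)) := by
  simp only [Xop, tensorFactor, Matrix.mulVec, dotProduct, Matrix.of_apply]
  rw [Finset.sum_eq_single (Function.update f i (f i + 1))]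
  · rw [Function.update_self, pauliX_succ]
    have : ∀ j ∈ Finset.univ.erase i,
        (if f j = Function.update f i (f i + 1) j then (1:ℂ) else 0) = 1 := by
      intro j hj
      rw [Function.update_of_ne (Finset.ne_of_mem_erase hj)]
      simp
    rw [Finset.prod_congr rfl this]
    simp
  · intro g _ hg
    rw [Finset.prod_boole]
    by_cases hall : ∀ j ∈ Finset.univ.erase i, f j = g j
    · rw [if_pos hall]
      have hgi : g i ≠ f i + 1 := by
        intro h
        apply hg
        funext j
        by_cases hji : j = i
        · subst hji; rw [Function.update_self, h]
        · rw [Function.update_of_ne hji]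
          exact (hall j (Finset.mem_erase.mpr ⟨hji, Finset.mem_univ j⟩)).symm
      rw [fin2_eq_of_ne_succ _ _ hgi, pauliX_self]
      ring
    · rw [if_neg hall]; ring
  · simp

lemma Zop_mulVec (n : ℕ) (i : Fin n) (ψ : (Fin n → Fin 2) → ℂ) (f : Fin n → Fin 2) :
    (Zop n i).mulVec ψ f = zsgn (f i) * ψ f := by
  simp only [Zop, tensorFactor, Matrix.mulVec, dotProduct, Matrix.of_apply]
  rw [Finset.sum_eq_single f]
  · rw [pauliZ_self]; simp
  · intro g _ hg
    rw [Finset.prod_boole]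
    by_cases hall : ∀ j ∈ Finset.univ.erase i, f j = g j
    · rw [if_pos hall]
      have hgi : f i ≠ g i := by
        intro h
        apply hg
        funext j
        by_cases hji : j = i
        · subst hji; exact h.symm
        · exact (hall j (Finset.mem_erase.mpr ⟨hji, Finset.mem_univ j⟩)).symm
      rw [pauliZ_ne _ _ hgi]; ring
    · rw [if_neg hall]; ring
  · simp

lemma Zlist_mulVec (n : ℕ) (l : List (Fin n)) (ψ : (Fin n → Fin 2) → ℂ) (f : Fin n → Fin 2) :
    ((l.map (Zop n)).prod).mulVec ψ f = (l.map (fun a => zsgn (f a))).prod * ψ f := by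
  induction l with
  | nil => simp [Matrix.one_mulVec]
  | cons a l ih =>
    simp only [List.map_cons, List.prod_cons]
    rw [← Matrix.mulVec_mulVec, Zop_mulVec, ih]
    ring

lemma Xlist_mulVec (n : ℕ) (l : List (Fin n)) (hl : l.Nodup) (ψ : (Fin n → Fin 2) → ℂ) :
    ∀ f, ((l.map (Xop n)).prod).mulVec ψ f = ψ (fun m => if m ∈ l then f m + 1 else f m) := by
  induction l with
  | nil => intro f; simp [Matrix.one_mulVec]
  | cons a l ih =>
    intro f
    simp only [List.map_cons, List.prod_cons]
    rw [← Matrix.mulVec_mulVec, Xop_mulVec, ih (List.nodup_cons.mp hl).2]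
    congr 1
    funext m
    by_cases hma : m = a
    · subst hma
      have : m ∉ l := (List.nodup_cons.mp hl).1
      simp [this, Function.update_self]
    · rw [Function.update_of_ne hma]
      simp [List.mem_cons, hma]

lemma matProd_Z_mulVec (n : ℕ) (S : Finset (Fin n)) (ψ : (Fin n → Fin 2) → ℂ)
    (f : Fin n → Fin 2) :
    (matProd (Zop n) S).mulVec ψ f = (∏ a ∈ S, zsgn (f a)) * ψ f := by
  rw [matProd, Zlist_mulVec]
  congr 1
  rw [← List.prod_toFinset _ (Finset.sort_nodup S _), Finset.sort_toFinset]

lemma matProd_X_mulVec (n : ℕ) (S : Finset (Fin n)) (ψ : (Fin n → Fin 2) → ℂ)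
    (f : Fin n → Fin 2) :
    (matProd (Xop n) S).mulVec ψ f = ψ (fun m => if m ∈ S then f m + 1 else f m) := by
  rw [matProd, Xlist_mulVec n _ (Finset.sort_nodup S _)]
  congr 1
  funext m
  simp [Finset.mem_sort]

lemma prod_zsgn_sq {n : ℕ} (S : Finset (Fin n)) (f : Fin n → Fin 2) :
    (∏ a ∈ S, zsgn (f a)) * (∏ a ∈ S, zsgn (f a)) = 1 := by
  rw [← Finset.prod_mul_distrib]
  exact Finset.prod_eq_one fun a _ => zsgn_sq (f a)

lemma Tupdate (n : ℕ) (f : Fin n → Fin 2) (i : Fin n) :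
    ∏ m, zsgn (Function.update f i (f i + 1) m) = -∏ m, zsgn (f m) := by
  rw [← Finset.mul_prod_erase Finset.univ _ (Finset.mem_univ i),
      ← Finset.mul_prod_erase Finset.univ (fun m => zsgn (f m)) (Finset.mem_univ i),
      Function.update_self, zsgn_add_one,
      Finset.prod_congr rfl
        (fun m hm => by rw [Function.update_of_ne (Finset.ne_of_mem_erase hm)])]
  ring

lemma stab_step (n : ℕ) (ψ : (Fin n → Fin 2) → ℂ)
    (hstab : ∀ i : Fin n, (Gop n i).mulVec ψ = ψ) (f : Fin n → Fin 2) (i : Fin n) :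
    ψ (Function.update f i (f i + 1)) = (∏ m, zsgn (f m)) * zsgn (f i) * ψ f := by
  have h := congrFun (hstab i) f
  rw [Gop, ← Matrix.mulVec_mulVec, Xop_mulVec, matProd_Z_mulVec] at h
  have hE : (∏ a ∈ Finset.univ.erase i, zsgn (Function.update f i (f i + 1) a))
      = ∏ a ∈ Finset.univ.erase i, zsgn (f a) := by
    exact Finset.prod_congr rfl fun a ha => by
      rw [Function.update_of_ne (Finset.ne_of_mem_erase ha)]
  rw [hE] at h
  have hT : (∏ m, zsgn (f m)) * zsgn (f i)
      = ∏ a ∈ Finset.univ.erase i, zsgn (f a) := by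
    rw [← Finset.mul_prod_erase Finset.univ (fun m => zsgn (f m)) (Finset.mem_univ i)]
    have h2 := zsgn_sq (f i)
    ring_nf
    ring_nf at h2
    rw [h2, one_mul]
  rw [hT]
  calc ψ (Function.update f i (f i + 1))
      = ((∏ a ∈ Finset.univ.erase i, zsgn (f a)) * (∏ a ∈ Finset.univ.erase i, zsgn (f a)))
        * ψ (Function.update f i (f i + 1)) := by rw [prod_zsgn_sq]; ring
    _ = (∏ a ∈ Finset.univ.erase i, zsgn (f a)) * ψ f := by rw [mul_assoc, h]

lemma opS_mulVec (n : ℕ) (ψ : (Fin n → Fin 2) → ℂ)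
    (hstab : ∀ i : Fin n, (Gop n i).mulVec ψ = ψ)
    (S : Finset (Fin n)) (hS : S.card = 3) (f : Fin n → Fin 2) :
    (matProd (Xop n) S * matProd (Zop n) Sᶜ).mulVec ψ f = -ψ f := by
  have hψ := stab_step n ψ hstab
  obtain ⟨i, j, k, hij, hik, hjk, rfl⟩ := Finset.card_eq_three.mp hS
  rw [← Matrix.mulVec_mulVec, matProd_X_mulVec, matProd_Z_mulVec]
  have hji : j ≠ i := hij.symm
  have hki : k ≠ i := hik.symm
  have hkj : k ≠ j := hjk.symm
  set g₁ := Function.update f i (f i + 1) with hg₁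
  set g₂ := Function.update g₁ j (g₁ j + 1) with hg₂
  have hg₁j : g₁ j = f j := Function.update_of_ne hji _ _
  have hg₂k : g₂ k = f k := by
    rw [hg₂, Function.update_of_ne hkj, hg₁, Function.update_of_ne hki]
  have hgk : (fun m => if m ∈ ({i, j, k} : Finset (Fin n)) then f m + 1 else f m)
      = Function.update g₂ k (g₂ k + 1) := by
    funext m
    by_cases hmk : m = k
    · subst hmk
      rw [Function.update_self, hg₂k]
      simp
    · rw [Function.update_of_ne hmk]
      by_cases hmj : m = j
      · subst hmj
        rw [hg₂, Function.update_self, hg₁j]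
        simp
      · rw [hg₂, Function.update_of_ne hmj]
        by_cases hmi : m = i
        · subst hmi
          rw [hg₁, Function.update_self]
          simp
        · rw [hg₁, Function.update_of_ne hmi]
          simp [hmi, hmj, hmk]
  rw [hgk]
  have hP : (∏ a ∈ ({i, j, k} : Finset (Fin n))ᶜ, zsgn (if a ∈ ({i, j, k} : Finset (Fin n)) then f a + 1 else f a))
      = ∏ a ∈ ({i, j, k} : Finset (Fin n))ᶜ, zsgn (f a) := by
    refine Finset.prod_congr rfl fun a ha => ?_
    rw [if_neg (Finset.mem_compl.mp ha)]
  rw [hP, hψ g₂ k, hg₂k, hg₂, Tupdate, hψ g₁ j, hg₁j, hg₁, Tupdate, hψ f i]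
  have hPQ : (∏ a ∈ ({i, j, k} : Finset (Fin n))ᶜ, zsgn (f a))
      * (zsgn (f i) * (zsgn (f j) * zsgn (f k))) = ∏ m, zsgn (f m) := by
    have hQ : (∏ a ∈ ({i, j, k} : Finset (Fin n)), zsgn (f a))
        = zsgn (f i) * (zsgn (f j) * zsgn (f k)) := by
      rw [Finset.prod_insert (by simp [hij, hik]),
          Finset.prod_insert (by simp [hjk]), Finset.prod_singleton]
    rw [← hQ, Finset.prod_compl_mul_prod]
  have hT2 : (∏ m, zsgn (f m)) * (∏ m, zsgn (f m)) = 1 := prod_zsgn_sq _ f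
  set T := ∏ m, zsgn (f m)
  linear_combination (-(T * T * T * ψ f)) * hPQ + (-(T * T + 1) * ψ f) * hT2

/-- with `Aᵢ = Xᵢ`, `Bᵢ = Zᵢ` and `ψ` a unit vector in `(ℂ²)^{⊗n}`
satisfying the stabilizer equations `Gᵢ ψ = ψ`, every correlator
`⟨ψ, Aᵢ (Π_{j≠i} Bⱼ) ψ⟩` equals `1`, every correlator
`⟨ψ, Aᵢ Aⱼ A_k (Π_{m∉{i,j,k}} B_m) ψ⟩` (for `i < j < k`, i.e. for a three-element
subset `S = {i,j,k}`) equals `−1`, and hence the expression `Iₙ` attains its maximal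
quantum (algebraic) value `n·C(n−1,2) + C(n,3)`. -/
theorem stmt1 (n : ℕ) (hn : 3 ≤ n) (ψ : (Fin n → Fin 2) → ℂ)
    (hunit : star ψ ⬝ᵥ ψ = 1)
    (hstab : ∀ i : Fin n, (Gop n i).mulVec ψ = ψ) :
    (∀ i : Fin n,
      star ψ ⬝ᵥ ((Xop n i * matProd (Zop n) (Finset.univ.erase i)).mulVec ψ) = 1) ∧
    (∀ S : Finset (Fin n), S.card = 3 →
      star ψ ⬝ᵥ ((matProd (Xop n) S * matProd (Zop n) Sᶜ).mulVec ψ) = -1) ∧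
    ((n - 1).choose 2 : ℂ) *
        (∑ i : Fin n,
          star ψ ⬝ᵥ ((Xop n i * matProd (Zop n) (Finset.univ.erase i)).mulVec ψ))
      - ∑ S ∈ Finset.powersetCard 3 (Finset.univ : Finset (Fin n)),
          star ψ ⬝ᵥ ((matProd (Xop n) S * matProd (Zop n) Sᶜ).mulVec ψ)
      = (n : ℂ) * ((n - 1).choose 2 : ℂ) + (n.choose 3 : ℂ) := by
  have h1 : ∀ i : Fin n,
      star ψ ⬝ᵥ ((Xop n i * matProd (Zop n) (Finset.univ.erase i)).mulVec ψ) = 1 := by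
    intro i
    have hv : (Xop n i * matProd (Zop n) (Finset.univ.erase i)).mulVec ψ = ψ := hstab i
    rw [hv, hunit]
  have h2 : ∀ S : Finset (Fin n), S.card = 3 →
      star ψ ⬝ᵥ ((matProd (Xop n) S * matProd (Zop n) Sᶜ).mulVec ψ) = -1 := by
    intro S hS
    have hv : (matProd (Xop n) S * matProd (Zop n) Sᶜ).mulVec ψ = -ψ :=
      funext fun f => opS_mulVec n ψ hstab S hS f
    rw [hv, dotProduct_neg, hunit]
  refine ⟨h1, h2, ?_⟩
  rw [Finset.sum_congr rfl (fun i _ => h1 i),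
      Finset.sum_congr rfl (fun S hS => h2 S (Finset.mem_powersetCard_univ.mp hS))]
  simp only [Finset.sum_const, Finset.card_univ, Fintype.card_fun, Fintype.card_fin,
    Finset.card_powersetCard, smul_eq_mul, mul_one, mul_neg, nsmul_eq_mul]
  push_cast
  ring
end

section
/- Under these hypotheses, A₁B₁ψ = A₂B₂ψ = A₃B₃ψ and AᵢBᵢψ = −BᵢAᵢψ for every i ∈ {1,2,3}; in particular (AᵢBᵢ + BᵢAᵢ)ψ = 0 for every i ∈ {1,2,3}. -/
/-- in a complex Hilbert space `H`, let `ψ` be a unit vector and let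
`A₁,A₂,A₃,B₁,B₂,B₃` be observables (self-adjoint involutive continuous linear
operators) satisfying the compatibility relations (`AᵢAⱼ = AⱼAᵢ`, `AᵢBⱼ = BⱼAᵢ`,
`BᵢBⱼ = BⱼBᵢ` for `i ≠ j`) and the maximal-violation relations of `I₃`
(`A₁B₂B₃ψ = ψ`, `B₁A₂B₃ψ = ψ`, `B₁B₂A₃ψ = ψ`, `A₁A₂A₃ψ = −ψ`).  Then
`A₁B₁ψ = A₂B₂ψ = A₃B₃ψ`, `AᵢBᵢψ = −BᵢAᵢψ` for every `i`, and in particular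
`(AᵢBᵢ + BᵢAᵢ)ψ = 0` for every `i`. -/
theorem stmt2 {H : Type*} [NormedAddCommGroup H] [InnerProductSpace ℂ H]
    (A B : Fin 3 → H →L[ℂ] H)
    (hAsa : ∀ i (x y : H), (inner ℂ (A i x) y : ℂ) = inner ℂ x (A i y))
    (hBsa : ∀ i (x y : H), (inner ℂ (B i x) y : ℂ) = inner ℂ x (B i y))
    (hAinv : ∀ i (x : H), A i (A i x) = x)
    (hBinv : ∀ i (x : H), B i (B i x) = x)
    (hAA : ∀ i j, i ≠ j → ∀ x : H, A i (A j x) = A j (A i x))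
    (hAB : ∀ i j, i ≠ j → ∀ x : H, A i (B j x) = B j (A i x))
    (hBB : ∀ i j, i ≠ j → ∀ x : H, B i (B j x) = B j (B i x))
    (ψ : H) (hψ : ‖ψ‖ = 1)
    (h1 : A 0 (B 1 (B 2 ψ)) = ψ)
    (h2 : B 0 (A 1 (B 2 ψ)) = ψ)
    (h3 : B 0 (B 1 (A 2 ψ)) = ψ)
    (h4 : A 0 (A 1 (A 2 ψ)) = -ψ) :
    (A 0 (B 0 ψ) = A 1 (B 1 ψ) ∧ A 1 (B 1 ψ) = A 2 (B 2 ψ)) ∧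
    (∀ i, A i (B i ψ) = -(B i (A i ψ))) ∧
    (∀ i, A i (B i ψ) + B i (A i ψ) = 0) := by
  have a0 : B 1 (B 2 ψ) = A 0 ψ := by
    have h := congrArg (A 0) h1; rwa [hAinv] at h
  have a1 : A 1 (B 2 ψ) = B 0 ψ := by
    have h := congrArg (B 0) h2; rwa [hBinv] at h
  have a2 : B 1 (A 2 ψ) = B 0 ψ := by
    have h := congrArg (B 0) h3; rwa [hBinv] at h
  have a3 : A 1 (A 2 ψ) = -(A 0 ψ) := by
    have h := congrArg (A 0) h4; rwa [hAinv, map_neg] at h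
  have e2 : A 2 ψ = B 0 (B 1 ψ) := by
    have h := congrArg (B 1) a2
    rwa [hBinv, hBB 1 0 (by decide)] at h
  have e1 : A 1 ψ = B 0 (B 2 ψ) := by
    have h := congrArg (B 2) a1
    rwa [← hAB 1 2 (by decide), hBinv, hBB 2 0 (by decide)] at h
  have eB2 : B 2 ψ = A 1 (B 0 ψ) := by
    have h := congrArg (A 1) a1
    rwa [hAinv] at h
  have k1 : A 1 (B 1 ψ) = -(B 0 (A 0 ψ)) := by
    have h := a3
    rw [e2, hAB 1 0 (by decide)] at h
    have h' := congrArg (B 0) h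
    rwa [hBinv, map_neg] at h'
  have k2 : A 2 (B 2 ψ) = -(B 0 (A 0 ψ)) := by
    rw [eB2, hAB 1 0 (by decide), hAB 2 0 (by decide), hAA 2 1 (by decide), a3, map_neg]
  have keyA : A 0 (A 1 ψ) = -(B 0 (B 1 ψ)) := by
    have h := congrArg (A 1) k1
    rw [hAinv, map_neg, hAB 1 0 (by decide)] at h
    have h' := congrArg (B 0) h
    rw [map_neg, hBinv] at h'
    rw [hAA 0 1 (by decide), h', neg_neg]
  have k0 : A 0 (B 0 ψ) = -(B 0 (A 0 ψ)) := by
    rw [← a1, hAB 1 2 (by decide), hAB 0 2 (by decide), keyA, map_neg,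
      hBB 2 0 (by decide), hBB 2 1 (by decide), a0]
  have m0 : B 0 (A 0 ψ) = -(A 0 (B 0 ψ)) := by rw [k0, neg_neg]
  have m1 : B 1 (A 1 ψ) = B 0 (A 0 ψ) := by
    rw [e1, hBB 1 0 (by decide), a0]
  have m2 : B 2 (A 2 ψ) = B 0 (A 0 ψ) := by
    rw [e2, hBB 2 0 (by decide), hBB 2 1 (by decide), a0]
  have anti : ∀ i, A i (B i ψ) = -(B i (A i ψ)) := by
    intro i
    fin_cases i
    · exact k0
    · exact k1.trans (neg_inj.mpr m1).symm
    · exact k2.trans (neg_inj.mpr m2).symm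
  refine ⟨⟨k0.trans k1.symm, k1.trans k2.symm⟩, anti, fun i => ?_⟩
  rw [anti i, neg_add_cancel]
end

section
/- Under these hypotheses, the subspace V = span{ψ, A₁ψ, A₂ψ, A₃ψ, B₁ψ, B₂ψ, B₃ψ, A₁B₁ψ} of H is invariant under the action of all six observables: Aᵢ(V) ⊆ V and Bᵢ(V) ⊆ V for every i ∈ {1,2,3}. -/
/-- under the hypotheses of maximal violation of `I₃` (same setup as
Statement 2), the subspace
`V = span{ψ, A₁ψ, A₂ψ, A₃ψ, B₁ψ, B₂ψ, B₃ψ, A₁B₁ψ}` of `H` is invariant under all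
six observables: `Aᵢ(V) ⊆ V` and `Bᵢ(V) ⊆ V` for every `i ∈ {1,2,3}`. -/
theorem stmt3 {H : Type*} [NormedAddCommGroup H] [InnerProductSpace ℂ H]
    (A B : Fin 3 → H →L[ℂ] H)
    (hAsa : ∀ i (x y : H), (inner ℂ (A i x) y : ℂ) = inner ℂ x (A i y))
    (hBsa : ∀ i (x y : H), (inner ℂ (B i x) y : ℂ) = inner ℂ x (B i y))
    (hAinv : ∀ i (x : H), A i (A i x) = x)
    (hBinv : ∀ i (x : H), B i (B i x) = x)
    (hAA : ∀ i j, i ≠ j → ∀ x : H, A i (A j x) = A j (A i x))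
    (hAB : ∀ i j, i ≠ j → ∀ x : H, A i (B j x) = B j (A i x))
    (hBB : ∀ i j, i ≠ j → ∀ x : H, B i (B j x) = B j (B i x))
    (ψ : H) (hψ : ‖ψ‖ = 1)
    (h1 : A 0 (B 1 (B 2 ψ)) = ψ)
    (h2 : B 0 (A 1 (B 2 ψ)) = ψ)
    (h3 : B 0 (B 1 (A 2 ψ)) = ψ)
    (h4 : A 0 (A 1 (A 2 ψ)) = -ψ)
    (V : Submodule ℂ H)
    (hV : V = Submodule.span ℂ
      ({ψ, A 0 ψ, A 1 ψ, A 2 ψ, B 0 ψ, B 1 ψ, B 2 ψ, A 0 (B 0 ψ)} : Set H)) :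
    ∀ v ∈ V, ∀ i, A i v ∈ V ∧ B i v ∈ V := by

  subst hV
  -- abbreviation for the generating set
  set S : Set H := {ψ, A 0 ψ, A 1 ψ, A 2 ψ, B 0 ψ, B 1 ψ, B 2 ψ, A 0 (B 0 ψ)} with hS
  -- memberships of generators
  have m0 : ψ ∈ Submodule.span ℂ S := Submodule.subset_span (by simp [hS])
  have m1 : A 0 ψ ∈ Submodule.span ℂ S := Submodule.subset_span (by simp [hS])
  have m2 : A 1 ψ ∈ Submodule.span ℂ S := Submodule.subset_span (by simp [hS])
  have m3 : A 2 ψ ∈ Submodule.span ℂ S := Submodule.subset_span (by simp [hS])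
  have m4 : B 0 ψ ∈ Submodule.span ℂ S := Submodule.subset_span (by simp [hS])
  have m5 : B 1 ψ ∈ Submodule.span ℂ S := Submodule.subset_span (by simp [hS])
  have m6 : B 2 ψ ∈ Submodule.span ℂ S := Submodule.subset_span (by simp [hS])
  have m7 : A 0 (B 0 ψ) ∈ Submodule.span ℂ S := Submodule.subset_span (by simp [hS])
  -- basic relations
  have e1 : B 1 (B 2 ψ) = A 0 ψ := by
    have := congrArg (⇑(A 0)) h1; rw [hAinv] at this; exact this
  have e2 : A 1 (B 2 ψ) = B 0 ψ := by
    have := congrArg (⇑(B 0)) h2; rw [hBinv] at this; exact this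
  have e3 : B 1 (A 2 ψ) = B 0 ψ := by
    have := congrArg (⇑(B 0)) h3; rw [hBinv] at this; exact this
  have e4 : A 1 (A 2 ψ) = -(A 0 ψ) := by
    have := congrArg (⇑(A 0)) h4; rw [hAinv, map_neg] at this; exact this
  -- level 2
  have f1 : B 1 (A 0 ψ) = B 2 ψ := by
    have := congrArg (⇑(B 1)) e1; rw [hBinv] at this; exact this.symm
  have f2 : B 2 (A 0 ψ) = B 1 ψ := by
    have := congrArg (⇑(B 2)) e1
    rw [hBB 2 1 (by decide), hBinv] at this; exact this.symm
  have f3 : A 1 (B 0 ψ) = B 2 ψ := by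
    have := congrArg (⇑(A 1)) e2; rw [hAinv] at this; exact this.symm
  have f4 : B 2 (B 0 ψ) = A 1 ψ := by
    have := congrArg (⇑(B 2)) e2
    rw [← hAB 1 2 (by decide), hBinv] at this; exact this.symm
  have f5 : B 1 (B 0 ψ) = A 2 ψ := by
    have := congrArg (⇑(B 1)) e3; rw [hBinv] at this; exact this.symm
  have f6 : A 2 (B 0 ψ) = B 1 ψ := by
    have := congrArg (⇑(A 2)) e3
    rw [hAB 2 1 (by decide), hAinv] at this; exact this.symm
  have f7 : A 1 (A 0 ψ) = -(A 2 ψ) := by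
    have := congrArg (⇑(A 1)) e4
    rw [hAinv, map_neg] at this; rw [this, neg_neg]
  have f8 : A 2 (A 0 ψ) = -(A 1 ψ) := by
    have := congrArg (⇑(A 2)) e4
    rw [hAA 2 1 (by decide), hAinv, map_neg] at this; rw [this, neg_neg]
  -- level 3
  have g1 : A 0 (B 1 ψ) = B 2 ψ := by rw [hAB 0 1 (by decide)]; exact f1
  have g2 : A 0 (B 2 ψ) = B 1 ψ := by rw [hAB 0 2 (by decide)]; exact f2
  have g3 : A 0 (A 1 ψ) = -(A 2 ψ) := by rw [hAA 0 1 (by decide)]; exact f7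
  have g4 : A 0 (A 2 ψ) = -(A 1 ψ) := by rw [hAA 0 2 (by decide)]; exact f8
  have g5 : A 2 (A 1 ψ) = -(A 0 ψ) := by rw [hAA 2 1 (by decide)]; exact e4
  have g19 : A 2 (B 1 ψ) = B 0 ψ := by rw [hAB 2 1 (by decide)]; exact e3
  have g20 : B 2 (B 1 ψ) = A 0 ψ := by rw [hBB 2 1 (by decide)]; exact e1
  have g6 : B 0 (A 1 ψ) = B 2 ψ := by rw [← f4, hBB 0 2 (by decide), hBinv]
  have g7 : B 0 (A 2 ψ) = B 1 ψ := by rw [← f5, hBB 0 1 (by decide), hBinv]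
  have g8 : A 2 (B 2 ψ) = A 0 (B 0 ψ) := by
    rw [← f1, hAB 2 1 (by decide), hAA 2 0 (by decide), ← hAB 0 1 (by decide), e3]
  have g9 : A 1 (B 1 ψ) = A 0 (B 0 ψ) := by
    rw [← f6, hAA 1 2 (by decide), f3]; exact g8
  have g10 : B 1 (A 1 ψ) = -(A 0 (B 0 ψ)) := by
    have ha1 : A 1 ψ = -(A 2 (A 0 ψ)) := by rw [f8, neg_neg]
    rw [ha1, map_neg, ← hAB 2 1 (by decide), f1, g8]
  have g11 : B 0 (A 0 ψ) = -(A 0 (B 0 ψ)) := by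
    rw [← e1, hBB 0 1 (by decide), hBB 0 2 (by decide), f4]; exact g10
  have g12 : B 2 (A 2 ψ) = -(A 0 (B 0 ψ)) := by
    rw [← f5, hBB 2 1 (by decide), f4]; exact g10
  have g13 : B 0 (A 0 (B 0 ψ)) = -(A 0 ψ) := by
    have := congrArg (⇑(B 0)) g11
    rw [hBinv, map_neg] at this; rw [this, neg_neg]
  have g14 : B 1 (A 0 (B 0 ψ)) = -(A 1 ψ) := by
    rw [← hAB 0 1 (by decide), f5]; exact g4
  have g15 : B 2 (A 0 (B 0 ψ)) = -(A 2 ψ) := by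
    rw [← hAB 0 2 (by decide), f4]; exact g3
  have g16 : A 1 (A 0 (B 0 ψ)) = B 1 ψ := by
    rw [hAA 1 0 (by decide), f3]; exact g2
  have g17 : A 2 (A 0 (B 0 ψ)) = B 2 ψ := by
    rw [hAA 2 0 (by decide), f6]; exact g1
  have g21 : B 0 (B 1 ψ) = A 2 ψ := by rw [← f6, ← hAB 2 0 (by decide), hBinv]
  have g22 : B 0 (B 2 ψ) = A 1 ψ := by rw [← f3, ← hAB 1 0 (by decide), hBinv]
  have g23 : B 2 (A 1 ψ) = B 0 ψ := by rw [← f4, hBinv]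
  -- closure principle
  have key : ∀ (T : H →L[ℂ] H), T ψ ∈ Submodule.span ℂ S →
      T (A 0 ψ) ∈ Submodule.span ℂ S → T (A 1 ψ) ∈ Submodule.span ℂ S →
      T (A 2 ψ) ∈ Submodule.span ℂ S → T (B 0 ψ) ∈ Submodule.span ℂ S →
      T (B 1 ψ) ∈ Submodule.span ℂ S → T (B 2 ψ) ∈ Submodule.span ℂ S →
      T (A 0 (B 0 ψ)) ∈ Submodule.span ℂ S →
      ∀ v ∈ Submodule.span ℂ S, T v ∈ Submodule.span ℂ S := by
    intro T k0 k1 k2 k3 k4 k5 k6 k7 v hv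
    have hle : Submodule.span ℂ S ≤
        Submodule.comap (T : H →ₗ[ℂ] H) (Submodule.span ℂ S) := by
      apply Submodule.span_le.mpr
      rw [hS]
      rintro x (rfl | rfl | rfl | rfl | rfl | rfl | rfl | rfl)
      exacts [k0, k1, k2, k3, k4, k5, k6, k7]
    exact hle hv
  intro v hv i
  fin_cases i
  · refine ⟨key (A 0) m1 (by rw [hAinv]; exact m0) (by rw [g3]; exact neg_mem m3)
      (by rw [g4]; exact neg_mem m2) m7 (by rw [g1]; exact m6)
      (by rw [g2]; exact m5) (by rw [hAinv]; exact m4) v hv,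
      key (B 0) m4 (by rw [g11]; exact neg_mem m7) (by rw [g6]; exact m6)
      (by rw [g7]; exact m5) (by rw [hBinv]; exact m0) (by rw [g21]; exact m3)
      (by rw [g22]; exact m2) (by rw [g13]; exact neg_mem m1) v hv⟩
  · refine ⟨key (A 1) m2 (by rw [f7]; exact neg_mem m3) (by rw [hAinv]; exact m0)
      (by rw [e4]; exact neg_mem m1) (by rw [f3]; exact m6)
      (by rw [g9]; exact m7) (by rw [e2]; exact m4) (by rw [g16]; exact m5) v hv,
      key (B 1) m5 (by rw [f1]; exact m6) (by rw [g10]; exact neg_mem m7)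
      (by rw [e3]; exact m4) (by rw [f5]; exact m3) (by rw [hBinv]; exact m0)
      (by rw [e1]; exact m1) (by rw [g14]; exact neg_mem m2) v hv⟩
  · refine ⟨key (A 2) m3 (by rw [f8]; exact neg_mem m2) (by rw [g5]; exact neg_mem m1)
      (by rw [hAinv]; exact m0) (by rw [f6]; exact m5)
      (by rw [g19]; exact m4) (by rw [g8]; exact m7) (by rw [g17]; exact m6) v hv,
      key (B 2) m6 (by rw [f2]; exact m5) (by rw [g23]; exact m4)
      (by rw [g12]; exact neg_mem m7) (by rw [f4]; exact m2)
      (by rw [g20]; exact m1) (by rw [hBinv]; exact m0)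
      (by rw [g15]; exact neg_mem m3) v hv⟩
end

section
/- Under these hypotheses, for every vector v in the subspace V = span{ψ, A₁ψ, A₂ψ, A₃ψ, B₁ψ, B₂ψ, B₃ψ, A₁B₁ψ} and every i ∈ {1,2,3}, one has (AᵢBᵢ + BᵢAᵢ) v = 0; that is, the anticommutator {Aᵢ, Bᵢ} vanishes identically on V, so the compressions of Aᵢ and Bᵢ to V anticommute. -/
/-- under the hypotheses of maximal violation of `I₃` (same setup as
Statement 2), for every vector `v` in the subspace
`V = span{ψ, A₁ψ, A₂ψ, A₃ψ, B₁ψ, B₂ψ, B₃ψ, A₁B₁ψ}` and every `i ∈ {1,2,3}` one has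
`(AᵢBᵢ + BᵢAᵢ) v = 0`: the anticommutator `{Aᵢ, Bᵢ}` vanishes identically on `V`,
so the compressions of `Aᵢ` and `Bᵢ` to `V` anticommute. -/
theorem stmt4 {H : Type*} [NormedAddCommGroup H] [InnerProductSpace ℂ H]
    (A B : Fin 3 → H →L[ℂ] H)
    (hAsa : ∀ i (x y : H), (inner ℂ (A i x) y : ℂ) = inner ℂ x (A i y))
    (hBsa : ∀ i (x y : H), (inner ℂ (B i x) y : ℂ) = inner ℂ x (B i y))
    (hAinv : ∀ i (x : H), A i (A i x) = x)
    (hBinv : ∀ i (x : H), B i (B i x) = x)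
    (hAA : ∀ i j, i ≠ j → ∀ x : H, A i (A j x) = A j (A i x))
    (hAB : ∀ i j, i ≠ j → ∀ x : H, A i (B j x) = B j (A i x))
    (hBB : ∀ i j, i ≠ j → ∀ x : H, B i (B j x) = B j (B i x))
    (ψ : H) (hψ : ‖ψ‖ = 1)
    (h1 : A 0 (B 1 (B 2 ψ)) = ψ)
    (h2 : B 0 (A 1 (B 2 ψ)) = ψ)
    (h3 : B 0 (B 1 (A 2 ψ)) = ψ)
    (h4 : A 0 (A 1 (A 2 ψ)) = -ψ)
    (V : Submodule ℂ H)
    (hV : V = Submodule.span ℂ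
      ({ψ, A 0 ψ, A 1 ψ, A 2 ψ, B 0 ψ, B 1 ψ, B 2 ψ, A 0 (B 0 ψ)} : Set H)) :
    ∀ v ∈ V, ∀ i, A i (B i v) + B i (A i v) = 0 := by
  have r1 : ∀ x : H, A 1 (A 0 x) = A 0 (A 1 x) := hAA 1 0 (by decide)
  have r2 : ∀ x : H, A 2 (A 0 x) = A 0 (A 2 x) := hAA 2 0 (by decide)
  have r3 : ∀ x : H, A 2 (A 1 x) = A 1 (A 2 x) := hAA 2 1 (by decide)
  have r4 : ∀ x : H, A 1 (B 0 x) = B 0 (A 1 x) := hAB 1 0 (by decide)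
  have r5 : ∀ x : H, A 2 (B 0 x) = B 0 (A 2 x) := hAB 2 0 (by decide)
  have r6 : ∀ x : H, A 2 (B 1 x) = B 1 (A 2 x) := hAB 2 1 (by decide)
  have r7 : ∀ x : H, B 1 (A 0 x) = A 0 (B 1 x) := fun x => (hAB 0 1 (by decide) x).symm
  have r8 : ∀ x : H, B 2 (A 0 x) = A 0 (B 2 x) := fun x => (hAB 0 2 (by decide) x).symm
  have r9 : ∀ x : H, B 2 (A 1 x) = A 1 (B 2 x) := fun x => (hAB 1 2 (by decide) x).symm
  have r10 : ∀ x : H, B 1 (B 0 x) = B 0 (B 1 x) := hBB 1 0 (by decide)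
  have r11 : ∀ x : H, B 2 (B 0 x) = B 0 (B 2 x) := hBB 2 0 (by decide)
  have r12 : ∀ x : H, B 2 (B 1 x) = B 1 (B 2 x) := hBB 2 1 (by decide)
  -- products of the three "=1" relations in three orders
  have e0 : B 0 (A 1 (B 2 (A 0 (B 1 (B 2 (B 0 (B 1 (A 2 ψ)))))))) = ψ := by
    rw [h3, h1, h2]
  have e1 : A 0 (B 1 (B 2 (B 0 (A 1 (B 2 (B 0 (B 1 (A 2 ψ)))))))) = ψ := by
    rw [h3, h2, h1]
  have e2 : B 0 (A 1 (B 2 (B 0 (B 1 (A 2 (A 0 (B 1 (B 2 ψ)))))))) = ψ := by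
    rw [h1, h3, h2]
  have hK0 : B 0 (A 0 (B 0 ψ)) = A 1 (A 2 ψ) := by
    have := congrArg (fun x => A 2 (A 1 x)) e0
    simpa [r1, r2, r3, r4, r5, r6, r7, r8, r9, r10, r11, r12, hAinv, hBinv] using this
  have hK1 : B 1 (A 1 (B 1 ψ)) = A 0 (A 2 ψ) := by
    have := congrArg (fun x => A 2 (A 0 x)) e1
    simpa [r1, r2, r3, r4, r5, r6, r7, r8, r9, r10, r11, r12, hAinv, hBinv] using this
  have hK2 : B 2 (A 2 (B 2 ψ)) = A 0 (A 1 ψ) := by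
    have := congrArg (fun x => A 1 (A 0 x)) e2
    simpa [r1, r2, r3, r4, r5, r6, r7, r8, r9, r10, r11, r12, hAinv, hBinv] using this
  have m0 : A 1 (A 2 ψ) = -(A 0 ψ) := by
    have := congrArg (A 0) h4
    simpa [r1, r2, r3, hAinv, map_neg] using this
  have m1 : A 0 (A 2 ψ) = -(A 1 ψ) := by
    have := congrArg (A 1) h4
    simpa [r1, r2, r3, hAinv, map_neg] using this
  have m2 : A 0 (A 1 ψ) = -(A 2 ψ) := by
    have := congrArg (A 2) h4
    simpa [r1, r2, r3, hAinv, map_neg] using this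
  have hT0 : A 0 (B 0 ψ) + B 0 (A 0 ψ) = 0 := by
    have h := congrArg (B 0) (hK0.trans m0)
    simp only [hBinv, map_neg] at h
    rw [h, neg_add_cancel]
  have hT1 : A 1 (B 1 ψ) + B 1 (A 1 ψ) = 0 := by
    have h := congrArg (B 1) (hK1.trans m1)
    simp only [hBinv, map_neg] at h
    rw [h, neg_add_cancel]
  have hT2 : A 2 (B 2 ψ) + B 2 (A 2 ψ) = 0 := by
    have h := congrArg (B 2) (hK2.trans m2)
    simp only [hBinv, map_neg] at h
    rw [h, neg_add_cancel]
  have hT : ∀ i : Fin 3, A i (B i ψ) + B i (A i ψ) = 0 := by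
    intro i; fin_cases i
    · exact hT0
    · exact hT1
    · exact hT2
  intro v hv i
  rw [hV] at hv
  induction hv using Submodule.span_induction with
  | mem x hx =>
    simp only [Set.mem_insert_iff, Set.mem_singleton_iff] at hx
    rcases hx with rfl | rfl | rfl | rfl | rfl | rfl | rfl | rfl
    · exact hT i
    · fin_cases i
      · simpa [r1, r2, r3, r4, r5, r6, r7, r8, r9, r10, r11, r12, hAinv, hBinv, add_comm] using congrArg (A 0) (hT 0)
      · simpa [r1, r2, r3, r4, r5, r6, r7, r8, r9, r10, r11, r12, hAinv, hBinv, add_comm] using congrArg (A 0) (hT 1)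
      · simpa [r1, r2, r3, r4, r5, r6, r7, r8, r9, r10, r11, r12, hAinv, hBinv, add_comm] using congrArg (A 0) (hT 2)
    · fin_cases i
      · simpa [r1, r2, r3, r4, r5, r6, r7, r8, r9, r10, r11, r12, hAinv, hBinv, add_comm] using congrArg (A 1) (hT 0)
      · simpa [r1, r2, r3, r4, r5, r6, r7, r8, r9, r10, r11, r12, hAinv, hBinv, add_comm] using congrArg (A 1) (hT 1)
      · simpa [r1, r2, r3, r4, r5, r6, r7, r8, r9, r10, r11, r12, hAinv, hBinv, add_comm] using congrArg (A 1) (hT 2)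
    · fin_cases i
      · simpa [r1, r2, r3, r4, r5, r6, r7, r8, r9, r10, r11, r12, hAinv, hBinv, add_comm] using congrArg (A 2) (hT 0)
      · simpa [r1, r2, r3, r4, r5, r6, r7, r8, r9, r10, r11, r12, hAinv, hBinv, add_comm] using congrArg (A 2) (hT 1)
      · simpa [r1, r2, r3, r4, r5, r6, r7, r8, r9, r10, r11, r12, hAinv, hBinv, add_comm] using congrArg (A 2) (hT 2)
    · fin_cases i
      · simpa [r1, r2, r3, r4, r5, r6, r7, r8, r9, r10, r11, r12, hAinv, hBinv, add_comm] using congrArg (B 0) (hT 0)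
      · simpa [r1, r2, r3, r4, r5, r6, r7, r8, r9, r10, r11, r12, hAinv, hBinv, add_comm] using congrArg (B 0) (hT 1)
      · simpa [r1, r2, r3, r4, r5, r6, r7, r8, r9, r10, r11, r12, hAinv, hBinv, add_comm] using congrArg (B 0) (hT 2)
    · fin_cases i
      · simpa [r1, r2, r3, r4, r5, r6, r7, r8, r9, r10, r11, r12, hAinv, hBinv, add_comm] using congrArg (B 1) (hT 0)
      · simpa [r1, r2, r3, r4, r5, r6, r7, r8, r9, r10, r11, r12, hAinv, hBinv, add_comm] using congrArg (B 1) (hT 1)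
      · simpa [r1, r2, r3, r4, r5, r6, r7, r8, r9, r10, r11, r12, hAinv, hBinv, add_comm] using congrArg (B 1) (hT 2)
    · fin_cases i
      · simpa [r1, r2, r3, r4, r5, r6, r7, r8, r9, r10, r11, r12, hAinv, hBinv, add_comm] using congrArg (B 2) (hT 0)
      · simpa [r1, r2, r3, r4, r5, r6, r7, r8, r9, r10, r11, r12, hAinv, hBinv, add_comm] using congrArg (B 2) (hT 1)
      · simpa [r1, r2, r3, r4, r5, r6, r7, r8, r9, r10, r11, r12, hAinv, hBinv, add_comm] using congrArg (B 2) (hT 2)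
    · fin_cases i
      · simpa [r1, r2, r3, r4, r5, r6, r7, r8, r9, r10, r11, r12, hAinv, hBinv, add_comm] using congrArg (fun x => A 0 (B 0 x)) (hT 0)
      · simpa [r1, r2, r3, r4, r5, r6, r7, r8, r9, r10, r11, r12, hAinv, hBinv, add_comm] using congrArg (fun x => A 0 (B 0 x)) (hT 1)
      · simpa [r1, r2, r3, r4, r5, r6, r7, r8, r9, r10, r11, r12, hAinv, hBinv, add_comm] using congrArg (fun x => A 0 (B 0 x)) (hT 2)
  | zero => simp
  | add x y _ _ hx hy =>
    simp only [map_add]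
    rw [add_add_add_comm, hx, hy, add_zero]
  | smul a x _ hx => simp [map_smul, ← smul_add, hx]
end

section
/- Under these hypotheses, the subspace V = span{ψ, A₁ψ, A₂ψ, A₃ψ, B₁ψ, B₂ψ, B₃ψ, A₁B₁ψ} has dimension exactly 8, and there exists a linear isometric equivalence e : V ≃ ℂ² ⊗ ℂ² ⊗ ℂ² such that for every v ∈ V and every i ∈ {1,2,3}, e(Aᵢ v) = Xᵢ e(v) and e(Bᵢ v) = Zᵢ e(v) (this is well defined since Aᵢ v, Bᵢ v ∈ V by invariance of V). -/
open scoped ComplexInnerProductSpace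

/-! ### Auxiliary material -/

noncomputable def Apow {H : Type*} [NormedAddCommGroup H] [InnerProductSpace ℂ H]
    (A : Fin 3 → H →L[ℂ] H) (i : Fin 3) (e : Fin 2) (x : H) : H :=
  if e = 0 then x else A i x

noncomputable def uvec {H : Type*} [NormedAddCommGroup H] [InnerProductSpace ℂ H]
    (A : Fin 3 → H →L[ℂ] H) (w : H) (g : Fin 3 → Fin 2) : H :=
  Apow A 0 (g 0) (Apow A 1 (g 1) (Apow A 2 (g 2) w))

def bflip (i : Fin 3) (g : Fin 3 → Fin 2) : Fin 3 → Fin 2 :=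
  Function.update g i (g i + 1)

section MatrixSide

lemma pauliX_apply (a b : Fin 2) : PauliX a b = if a = b + 1 then 1 else 0 := by
  fin_cases a <;> fin_cases b <;>
    simp [PauliX, show (2 : Fin 2) = 0 by decide, show (0 : Fin 2) ≠ 1 by decide]

lemma pauliZ_apply (a b : Fin 2) : PauliZ a b = if a = b then ((-1 : ℂ)) ^ (b : ℕ) else 0 := by
  fin_cases a <;> fin_cases b <;>
    simp [PauliZ, show (0 : Fin 2) ≠ 1 by decide, show (1 : Fin 2) ≠ 0 by decide]

lemma eq_bflip_iff (i : Fin 3) (j g : Fin 3 → Fin 2) :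
    j = bflip i g ↔ (j i = g i + 1 ∧ ∀ l ∈ Finset.univ.erase i, j l = g l) := by
  constructor
  · rintro rfl
    exact ⟨by simp [bflip], fun l hl => by
      simp [bflip, Function.update_of_ne (Finset.ne_of_mem_erase hl)]⟩
  · rintro ⟨hh1, hh2⟩
    funext l
    by_cases hl : l = i
    · subst hl; simpa [bflip] using hh1
    · rw [bflip, Function.update_of_ne hl]; exact hh2 l (by simp [hl])

lemma eq_all_iff (i : Fin 3) (j g : Fin 3 → Fin 2) :
    j = g ↔ (j i = g i ∧ ∀ l ∈ Finset.univ.erase i, j l = g l) := by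
  constructor
  · rintro rfl; exact ⟨rfl, fun l _ => rfl⟩
  · rintro ⟨hh1, hh2⟩
    funext l
    by_cases hl : l = i
    · subst hl; exact hh1
    · exact hh2 l (by simp [hl])

lemma tf_X (i : Fin 3) (j g : Fin 3 → Fin 2) :
    tensorFactor 3 PauliX i j g = if j = bflip i g then 1 else 0 := by
  show PauliX (j i) (g i) * _ = _
  rw [pauliX_apply, Finset.prod_boole, ite_zero_mul_ite_zero, one_mul]
  by_cases hc : j = bflip i g
  · rw [if_pos ((eq_bflip_iff i j g).mp hc), if_pos hc]
  · rw [if_neg (fun hh => hc ((eq_bflip_iff i j g).mpr hh)), if_neg hc]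

lemma tf_Z (i : Fin 3) (j g : Fin 3 → Fin 2) :
    tensorFactor 3 PauliZ i j g = ((-1 : ℂ)) ^ ((g i : ℕ)) * (if j = g then 1 else 0) := by
  show PauliZ (j i) (g i) * _ = _
  rw [pauliZ_apply, Finset.prod_boole, ite_zero_mul_ite_zero, mul_one]
  simp only [eq_all_iff i j g]
  by_cases h : j i = g i ∧ ∀ l ∈ Finset.univ.erase i, j l = g l
  · rw [if_pos h, if_pos h, mul_one]
  · rw [if_neg h, if_neg h, mul_zero]

lemma mulvec_single (M : Matrix (Fin 3 → Fin 2) (Fin 3 → Fin 2) ℂ) (g : Fin 3 → Fin 2) :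
    Matrix.mulVec M (Pi.single g 1) = fun j => M j g := by
  funext j
  simp [Matrix.mulVec, dotProduct, Pi.single_apply, mul_ite, Finset.sum_ite_eq]

lemma mulX (i : Fin 3) (g : Fin 3 → Fin 2) :
    Matrix.toEuclideanLin (tensorFactor 3 PauliX i) (EuclideanSpace.single g 1)
      = EuclideanSpace.single (bflip i g) 1 := by
  apply (WithLp.equiv 2 _).injective
  change Matrix.mulVec (tensorFactor 3 PauliX i) (WithLp.ofLp (EuclideanSpace.single g 1))
    = WithLp.ofLp (EuclideanSpace.single (bflip i g) (1 : ℂ))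
  rw [PiLp.ofLp_single, PiLp.ofLp_single, mulvec_single]
  funext j
  rw [tf_X, Pi.single_apply]

lemma mulZ (i : Fin 3) (g : Fin 3 → Fin 2) :
    Matrix.toEuclideanLin (tensorFactor 3 PauliZ i) (EuclideanSpace.single g 1)
      = ((-1 : ℂ)) ^ ((g i : ℕ)) • EuclideanSpace.single g 1 := by
  apply (WithLp.equiv 2 _).injective
  change Matrix.mulVec (tensorFactor 3 PauliZ i) (WithLp.ofLp (EuclideanSpace.single g 1))
    = WithLp.ofLp (((-1 : ℂ)) ^ ((g i : ℕ)) • EuclideanSpace.single g (1 : ℂ))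
  rw [PiLp.ofLp_single, WithLp.ofLp_smul, PiLp.ofLp_single, mulvec_single]
  funext j
  simp [tf_Z, Pi.single_apply]

end MatrixSide

section Helpers
variable {H : Type*} [NormedAddCommGroup H] [InnerProductSpace ℂ H]
  {A B : Fin 3 → H →L[ℂ] H} {w x y : H}

lemma ghz_core (A B : Fin 3 → H →L[ℂ] H) (ψ : H)
    (hAinv : ∀ i (x : H), A i (A i x) = x)
    (hBinv : ∀ i (x : H), B i (B i x) = x)
    (hAA : ∀ i j, i ≠ j → ∀ x : H, A i (A j x) = A j (A i x))
    (hAB : ∀ i j, i ≠ j → ∀ x : H, A i (B j x) = B j (A i x))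
    (hBB : ∀ i j, i ≠ j → ∀ x : H, B i (B j x) = B j (B i x))
    (i j k : Fin 3) (hij : i ≠ j) (hjk : j ≠ k) (hik : i ≠ k)
    (r1 : A i (B j (B k ψ)) = ψ) (r4 : A i (A j (A k ψ)) = -ψ) :
    B j (B k ψ) = A i ψ ∧ A i (B j ψ) = B k ψ ∧ B j (A i ψ) = B k ψ ∧
      A i (A j ψ) = -(A k ψ) := by
  refine ⟨?_, ?_, ?_, ?_⟩
  · have := congrArg (A i) r1; rwa [hAinv] at this
  · have e : B k (A i (B j ψ)) = ψ := by
      rw [← hAB i k hik, hBB k j hjk.symm]; exact r1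
    have := congrArg (B k) e; rwa [hBinv] at this
  · have e := r1
    rw [hAB i j hij, hAB i k hik, hBB j k hjk] at e
    have := congrArg (B k) e; rwa [hBinv] at this
  · have e := r4
    rw [hAA j k hjk, hAA i k hik] at e
    have := congrArg (A k) e; rwa [hAinv, map_neg] at this

@[simp] lemma apow_zero (i : Fin 3) (x : H) : Apow A i 0 x = x := rfl

@[simp] lemma apow_one (i : Fin 3) (x : H) : Apow A i 1 x = A i x := rfl

lemma apow_comm {T : H →L[ℂ] H} (i : Fin 3) (e : Fin 2)
    (hc : ∀ x : H, T (A i x) = A i (T x)) (x : H) :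
    T (Apow A i e x) = Apow A i e (T x) := by
  rcases (by omega : e = 0 ∨ e = 1) with rfl | rfl <;> simp [hc]

lemma apow_succ (hAinv : ∀ i (x : H), A i (A i x) = x) (i : Fin 3) (e : Fin 2) (x : H) :
    A i (Apow A i e x) = Apow A i (e + 1) x := by
  rcases (by omega : e = 0 ∨ e = 1) with rfl | rfl <;> simp [Apow, hAinv]

lemma apow_adj (hAsa : ∀ i (x y : H), ⟪A i x, y⟫ = ⟪x, A i y⟫) (i : Fin 3) (e : Fin 2)
    (x y : H) : ⟪Apow A i e x, y⟫ = ⟪x, Apow A i e y⟫ := by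
  rcases (by omega : e = 0 ∨ e = 1) with rfl | rfl <;> simp [hAsa]

lemma apow_neg (i : Fin 3) (e : Fin 2) (x : H) :
    Apow A i e (-x) = -(Apow A i e x) := by
  rcases (by omega : e = 0 ∨ e = 1) with rfl | rfl <;> simp

lemma uvec_A (hAinv : ∀ i (x : H), A i (A i x) = x)
    (hAA : ∀ i j, i ≠ j → ∀ x : H, A i (A j x) = A j (A i x))
    (i : Fin 3) (g : Fin 3 → Fin 2) :
    A i (uvec A w g) = uvec A w (bflip i g) := by
  fin_cases i
  · show A 0 _ = _
    rw [uvec, apow_succ hAinv]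
    simp [uvec, bflip, Function.update]
  · show A 1 _ = _
    rw [uvec, apow_comm 0 (g 0) (fun x => (hAA 1 0 (by decide) x)),
      apow_succ hAinv]
    simp [uvec, bflip, Function.update]
  · show A 2 _ = _
    rw [uvec, apow_comm 0 (g 0) (fun x => (hAA 2 0 (by decide) x)),
      apow_comm 1 (g 1) (fun x => (hAA 2 1 (by decide) x)), apow_succ hAinv]
    simp [uvec, bflip, Function.update]

lemma uvec_apow (hAinv : ∀ i (x : H), A i (A i x) = x)
    (hAA : ∀ i j, i ≠ j → ∀ x : H, A i (A j x) = A j (A i x))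
    (i : Fin 3) (e : Fin 2) (g : Fin 3 → Fin 2) :
    Apow A i e (uvec A w g) = uvec A w (Function.update g i (g i + e)) := by
  rcases (by omega : e = 0 ∨ e = 1) with rfl | rfl
  · simp
  · exact uvec_A hAinv hAA i g

lemma uvec_B0 (hAA : ∀ i j, i ≠ j → ∀ x : H, A i (A j x) = A j (A i x))
    (hAB : ∀ i j, i ≠ j → ∀ x : H, A i (B j x) = B j (A i x))
    (hBw : B 0 w = w) (hBAw : B 0 (A 0 w) = -(A 0 w))
    (g : Fin 3 → Fin 2) :
    B 0 (uvec A w g) = ((-1 : ℂ)) ^ ((g 0 : ℕ)) • uvec A w g := by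
  have hc1 : ∀ x : H, B 0 (A 1 x) = A 1 (B 0 x) := fun x => (hAB 1 0 (by decide) x).symm
  have hc2 : ∀ x : H, B 0 (A 2 x) = A 2 (B 0 x) := fun x => (hAB 2 0 (by decide) x).symm
  rcases (by omega : g 0 = 0 ∨ g 0 = 1) with h0 | h0 <;>
    simp only [uvec, h0, apow_zero, apow_one, Fin.val_zero, Fin.val_one, pow_zero, pow_one,
      one_smul, neg_smul, one_smul]
  · rw [apow_comm 1 (g 1) hc1, apow_comm 2 (g 2) hc2, hBw]
  · have hmove : A 0 (Apow A 1 (g 1) (Apow A 2 (g 2) w))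
        = Apow A 1 (g 1) (Apow A 2 (g 2) (A 0 w)) := by
      rw [apow_comm 1 (g 1) (fun x => hAA 0 1 (by decide) x),
        apow_comm 2 (g 2) (fun x => hAA 0 2 (by decide) x)]
    rw [hmove, apow_comm 1 (g 1) hc1, apow_comm 2 (g 2) hc2, hBAw, apow_neg, apow_neg]

lemma uvec_B1 (hAA : ∀ i j, i ≠ j → ∀ x : H, A i (A j x) = A j (A i x))
    (hAB : ∀ i j, i ≠ j → ∀ x : H, A i (B j x) = B j (A i x))
    (hBw : B 1 w = w) (hBAw : B 1 (A 1 w) = -(A 1 w))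
    (g : Fin 3 → Fin 2) :
    B 1 (uvec A w g) = ((-1 : ℂ)) ^ ((g 1 : ℕ)) • uvec A w g := by
  have hc0 : ∀ x : H, B 1 (A 0 x) = A 0 (B 1 x) := fun x => (hAB 0 1 (by decide) x).symm
  have hc2 : ∀ x : H, B 1 (A 2 x) = A 2 (B 1 x) := fun x => (hAB 2 1 (by decide) x).symm
  rcases (by omega : g 1 = 0 ∨ g 1 = 1) with h0 | h0 <;>
    simp only [uvec, h0, apow_zero, apow_one, Fin.val_zero, Fin.val_one, pow_zero, pow_one,
      one_smul, neg_smul, one_smul] <;>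
    rw [apow_comm 0 (g 0) hc0]
  · rw [apow_comm 2 (g 2) hc2, hBw]
  · have hmove : A 1 (Apow A 2 (g 2) w) = Apow A 2 (g 2) (A 1 w) :=
      apow_comm 2 (g 2) (fun x => hAA 1 2 (by decide) x) w
    rw [hmove, apow_comm 2 (g 2) hc2, hBAw, apow_neg, apow_neg]

lemma uvec_B2
    (hAB : ∀ i j, i ≠ j → ∀ x : H, A i (B j x) = B j (A i x))
    (hBw : B 2 w = w) (hBAw : B 2 (A 2 w) = -(A 2 w))
    (g : Fin 3 → Fin 2) :
    B 2 (uvec A w g) = ((-1 : ℂ)) ^ ((g 2 : ℕ)) • uvec A w g := by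
  have hc0 : ∀ x : H, B 2 (A 0 x) = A 0 (B 2 x) := fun x => (hAB 0 2 (by decide) x).symm
  have hc1 : ∀ x : H, B 2 (A 1 x) = A 1 (B 2 x) := fun x => (hAB 1 2 (by decide) x).symm
  rcases (by omega : g 2 = 0 ∨ g 2 = 1) with h0 | h0 <;>
    simp only [uvec, h0, apow_zero, apow_one, Fin.val_zero, Fin.val_one, pow_zero, pow_one,
      one_smul, neg_smul, one_smul] <;>
    rw [apow_comm 0 (g 0) hc0, apow_comm 1 (g 1) hc1]
  · rw [hBw]
  · rw [hBAw, apow_neg, apow_neg]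

lemma uvec_B (hAA : ∀ i j, i ≠ j → ∀ x : H, A i (A j x) = A j (A i x))
    (hAB : ∀ i j, i ≠ j → ∀ x : H, A i (B j x) = B j (A i x))
    (hBw : ∀ i, B i w = w) (hBAw : ∀ i, B i (A i w) = -(A i w))
    (i : Fin 3) (g : Fin 3 → Fin 2) :
    B i (uvec A w g) = ((-1 : ℂ)) ^ ((g i : ℕ)) • uvec A w g := by
  fin_cases i
  · exact uvec_B0 hAA hAB (hBw 0) (hBAw 0) g
  · exact uvec_B1 hAA hAB (hBw 1) (hBAw 1) g
  · exact uvec_B2 hAB (hBw 2) (hBAw 2) g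

end Helpers

lemma fin2_add_eq_zero_iff : ∀ x y : Fin 2, x + y = 0 ↔ y = x := by decide

set_option maxHeartbeats 2000000 in
/-- under the maximal-violation hypotheses for `I₃` (setup as in
Statement 2), the subspace `V = span{ψ, A₁ψ, A₂ψ, A₃ψ, B₁ψ, B₂ψ, B₃ψ, A₁B₁ψ}` has
dimension exactly `8`, and there is a linear isometric equivalence
`e : V ≃ ℂ² ⊗ ℂ² ⊗ ℂ²` (the right-hand side realised as
`EuclideanSpace ℂ (Fin 3 → Fin 2)`) intertwining `Aᵢ` with `Xᵢ` and `Bᵢ` with `Zᵢ`: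
`e(Aᵢ v) = Xᵢ e(v)` and `e(Bᵢ v) = Zᵢ e(v)` for all `v ∈ V` (well defined since
`Aᵢ v, Bᵢ v ∈ V` by invariance of `V`, expressed here by quantifying over the
membership proofs). -/
theorem stmt7 {H : Type*} [NormedAddCommGroup H] [InnerProductSpace ℂ H]
    (A B : Fin 3 → H →L[ℂ] H)
    (hAsa : ∀ i (x y : H), (inner ℂ (A i x) y : ℂ) = inner ℂ x (A i y))
    (hBsa : ∀ i (x y : H), (inner ℂ (B i x) y : ℂ) = inner ℂ x (B i y))
    (hAinv : ∀ i (x : H), A i (A i x) = x)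
    (hBinv : ∀ i (x : H), B i (B i x) = x)
    (hAA : ∀ i j, i ≠ j → ∀ x : H, A i (A j x) = A j (A i x))
    (hAB : ∀ i j, i ≠ j → ∀ x : H, A i (B j x) = B j (A i x))
    (hBB : ∀ i j, i ≠ j → ∀ x : H, B i (B j x) = B j (B i x))
    (ψ : H) (hψ : ‖ψ‖ = 1)
    (h1 : A 0 (B 1 (B 2 ψ)) = ψ)
    (h2 : B 0 (A 1 (B 2 ψ)) = ψ)
    (h3 : B 0 (B 1 (A 2 ψ)) = ψ)
    (h4 : A 0 (A 1 (A 2 ψ)) = -ψ)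
    (V : Submodule ℂ H)
    (hV : V = Submodule.span ℂ
      ({ψ, A 0 ψ, A 1 ψ, A 2 ψ, B 0 ψ, B 1 ψ, B 2 ψ, A 0 (B 0 ψ)} : Set H)) :
    Module.finrank ℂ V = 8 ∧
    ∃ e : V ≃ₗᵢ[ℂ] EuclideanSpace ℂ (Fin 3 → Fin 2),
      ∀ (v : H) (hv : v ∈ V) (i : Fin 3) (hAv : A i v ∈ V) (hBv : B i v ∈ V),
        e ⟨A i v, hAv⟩ = Matrix.toEuclideanLin (tensorFactor 3 PauliX i) (e ⟨v, hv⟩) ∧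
        e ⟨B i v, hBv⟩ = Matrix.toEuclideanLin (tensorFactor 3 PauliZ i) (e ⟨v, hv⟩) := by
  classical
  -- Stage 1 : the table of relations
  obtain ⟨T1_012, T2_012, T3_012, T4_012⟩ :=
    ghz_core A B ψ hAinv hBinv hAA hAB hBB 0 1 2 (by decide) (by decide) (by decide) h1 h4
  obtain ⟨T1_021, T2_021, T3_021, T4_021⟩ :=
    ghz_core A B ψ hAinv hBinv hAA hAB hBB 0 2 1 (by decide) (by decide) (by decide)
      (by rw [hBB 2 1 (by decide)]; exact h1) (by rw [hAA 2 1 (by decide)]; exact h4)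
  obtain ⟨T1_102, T2_102, T3_102, T4_102⟩ :=
    ghz_core A B ψ hAinv hBinv hAA hAB hBB 1 0 2 (by decide) (by decide) (by decide)
      (by rw [hAB 1 0 (by decide)]; exact h2) (by rw [hAA 1 0 (by decide)]; exact h4)
  obtain ⟨T1_120, T2_120, T3_120, T4_120⟩ :=
    ghz_core A B ψ hAinv hBinv hAA hAB hBB 1 2 0 (by decide) (by decide) (by decide)
      (by rw [hBB 2 0 (by decide), hAB 1 0 (by decide)]; exact h2)
      (by rw [hAA 2 0 (by decide), hAA 1 0 (by decide)]; exact h4)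
  obtain ⟨T1_201, T2_201, T3_201, T4_201⟩ :=
    ghz_core A B ψ hAinv hBinv hAA hAB hBB 2 0 1 (by decide) (by decide) (by decide)
      (by rw [hAB 2 0 (by decide), hAB 2 1 (by decide)]; exact h3)
      (by rw [hAA 2 0 (by decide), hAA 2 1 (by decide)]; exact h4)
  obtain ⟨T1_210, T2_210, T3_210, T4_210⟩ :=
    ghz_core A B ψ hAinv hBinv hAA hAB hBB 2 1 0 (by decide) (by decide) (by decide)
      (by rw [hAB 2 1 (by decide), hAB 2 0 (by decide), hBB 1 0 (by decide)]; exact h3)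
      (by rw [hAA 2 1 (by decide), hAA 2 0 (by decide), hAA 1 0 (by decide)]; exact h4)
  -- the `c`-lemmas
  have C1_1 : A 1 (B 1 ψ) = A 0 (B 0 ψ) := by
    rw [← T2_021, ← T2_120, hAA 1 0 (by decide)]
  have C1_2 : A 2 (B 2 ψ) = A 0 (B 0 ψ) := by
    rw [← T2_012, ← T2_210, hAA 2 0 (by decide)]
  have C2_0 : B 0 (A 0 ψ) = -(A 0 (B 0 ψ)) := by
    rw [← T1_012, hBB 0 1 (by decide), T1_102, ← T3_210, hAB 0 1 (by decide), T4_021,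
      map_neg, neg_neg]
  have C2_1 : B 1 (A 1 ψ) = -(A 0 (B 0 ψ)) := by
    rw [← T3_210, hAB 0 1 (by decide), T4_021, map_neg, neg_neg]
  have C2_2 : B 2 (A 2 ψ) = -(A 0 (B 0 ψ)) := by
    rw [← T3_120, hAB 0 2 (by decide), T4_012, map_neg, neg_neg]
  have e1_0 : A 0 (B 0 ψ) = -(B 0 (A 0 ψ)) := by rw [C2_0, neg_neg]
  have e1_1 : A 1 (B 1 ψ) = -(B 1 (A 1 ψ)) := by rw [C2_1, neg_neg, C1_1]
  have e1_2 : A 2 (B 2 ψ) = -(B 2 (A 2 ψ)) := by rw [C2_2, neg_neg, C1_2]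
  have C4_0 : B 0 (A 0 (B 0 ψ)) = -(A 0 ψ) := by rw [e1_0, map_neg, hBinv]
  have C4_1 : B 1 (A 0 (B 0 ψ)) = -(A 1 ψ) := by rw [← C1_1, e1_1, map_neg, hBinv]
  have C4_2 : B 2 (A 0 (B 0 ψ)) = -(A 2 ψ) := by rw [← C1_2, e1_2, map_neg, hBinv]
  have C3_1 : A 1 (A 0 (B 0 ψ)) = B 1 ψ := by rw [← C1_1, hAinv]
  have C3_2 : A 2 (A 0 (B 0 ψ)) = B 2 ψ := by rw [← C1_2, hAinv]
  -- Stage 2 : vanishing inner products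
  have hpsi1 : ⟪ψ, ψ⟫ = 1 := by
    rw [inner_self_eq_norm_sq_to_K, hψ]; norm_num
  have ta0 : ⟪ψ, A 0 ψ⟫ = 0 := by
    have key : ⟪ψ, A 0 ψ⟫ = -⟪ψ, A 0 ψ⟫ := by
      calc ⟪ψ, A 0 ψ⟫ = ⟪B 0 (A 1 (B 2 ψ)), A 0 ψ⟫ := by rw [h2]
      _ = ⟪ψ, B 2 (A 1 (B 0 (A 0 ψ)))⟫ := by rw [hBsa 0, hAsa 1, hBsa 2]
      _ = -⟪ψ, A 0 ψ⟫ := by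
          simp only [C2_0, map_neg]
          rw [C3_1, T1_021, inner_neg_right]
    linear_combination key / 2
  have ta1 : ⟪ψ, A 1 ψ⟫ = 0 := by
    have key : ⟪ψ, A 1 ψ⟫ = -⟪ψ, A 1 ψ⟫ := by
      calc ⟪ψ, A 1 ψ⟫ = ⟪B 0 (B 1 (A 2 ψ)), A 1 ψ⟫ := by rw [h3]
      _ = ⟪ψ, A 2 (B 1 (B 0 (A 1 ψ)))⟫ := by rw [hBsa 0, hBsa 1, hAsa 2]
      _ = -⟪ψ, A 1 ψ⟫ := by rw [T3_102, T1_012, T4_201, inner_neg_right]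
    linear_combination key / 2
  have ta2 : ⟪ψ, A 2 ψ⟫ = 0 := by
    have key : ⟪ψ, A 2 ψ⟫ = -⟪ψ, A 2 ψ⟫ := by
      calc ⟪ψ, A 2 ψ⟫ = ⟪B 0 (A 1 (B 2 ψ)), A 2 ψ⟫ := by rw [h2]
      _ = ⟪ψ, B 2 (A 1 (B 0 (A 2 ψ)))⟫ := by rw [hBsa 0, hAsa 1, hBsa 2]
      _ = -⟪ψ, A 2 ψ⟫ := by rw [T3_201, C1_1, C4_2, inner_neg_right]
    linear_combination key / 2
  have tb0 : ⟪ψ, B 0 ψ⟫ = 0 := by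
    have key : ⟪ψ, B 0 ψ⟫ = -⟪ψ, B 0 ψ⟫ := by
      calc ⟪ψ, B 0 ψ⟫ = ⟪A 0 (B 1 (B 2 ψ)), B 0 ψ⟫ := by rw [h1]
      _ = ⟪ψ, B 2 (B 1 (A 0 (B 0 ψ)))⟫ := by rw [hAsa 0, hBsa 1, hBsa 2]
      _ = -⟪ψ, B 0 ψ⟫ := by rw [C4_1, map_neg, T3_120, inner_neg_right]
    linear_combination key / 2
  have hpsi4 : -(A 0 (A 1 (A 2 ψ))) = ψ := by rw [h4, neg_neg]
  have tb1 : ⟪ψ, B 1 ψ⟫ = 0 := by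
    have key : ⟪ψ, B 1 ψ⟫ = -⟪ψ, B 1 ψ⟫ := by
      calc ⟪ψ, B 1 ψ⟫ = ⟪-(A 0 (A 1 (A 2 ψ))), B 1 ψ⟫ := by rw [hpsi4]
      _ = -⟪ψ, A 2 (A 1 (A 0 (B 1 ψ)))⟫ := by
          rw [inner_neg_left, hAsa 0, hAsa 1, hAsa 2]
      _ = -⟪ψ, B 1 ψ⟫ := by rw [T2_012, T2_120, T2_201]
    linear_combination key / 2
  have tb2 : ⟪ψ, B 2 ψ⟫ = 0 := by
    have key : ⟪ψ, B 2 ψ⟫ = -⟪ψ, B 2 ψ⟫ := by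
      calc ⟪ψ, B 2 ψ⟫ = ⟪-(A 0 (A 1 (A 2 ψ))), B 2 ψ⟫ := by rw [hpsi4]
      _ = -⟪ψ, A 2 (A 1 (A 0 (B 2 ψ)))⟫ := by
          rw [inner_neg_left, hAsa 0, hAsa 1, hAsa 2]
      _ = -⟪ψ, B 2 ψ⟫ := by rw [T2_021, C1_1, C3_2]
    linear_combination key / 2
  have tc : ⟪ψ, A 0 (B 0 ψ)⟫ = 0 := by
    have key : ⟪ψ, A 0 (B 0 ψ)⟫ = -⟪ψ, A 0 (B 0 ψ)⟫ := by
      calc ⟪ψ, A 0 (B 0 ψ)⟫ = ⟪A 0 (B 1 (B 2 ψ)), A 0 (B 0 ψ)⟫ := by rw [h1]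
      _ = ⟪ψ, B 2 (B 1 (A 0 (A 0 (B 0 ψ))))⟫ := by rw [hAsa 0, hBsa 1, hBsa 2]
      _ = -⟪ψ, A 0 (B 0 ψ)⟫ := by rw [hAinv, T1_210, C2_2, inner_neg_right]
    linear_combination key / 2
  -- Stage 3 : the cyclic vector w₀ and its normalisation w
  set w0 : H := ψ + A 0 ψ + A 1 ψ + A 2 ψ + B 0 ψ + B 1 ψ + B 2 ψ - A 0 (B 0 ψ) with hw0def
  have hBw0_0 : B 0 w0 = w0 := by
    rw [hw0def]
    simp only [map_add, map_sub, map_neg, hBinv, C2_0, C2_1, C2_2, C4_0, C4_1, C4_2,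
      T1_012, T1_021, T1_102, T1_120, T1_201, T1_210,
      T3_012, T3_021, T3_102, T3_120, T3_201, T3_210]
    abel
  have hBw0_1 : B 1 w0 = w0 := by
    rw [hw0def]
    simp only [map_add, map_sub, map_neg, hBinv, C2_0, C2_1, C2_2, C4_0, C4_1, C4_2,
      T1_012, T1_021, T1_102, T1_120, T1_201, T1_210,
      T3_012, T3_021, T3_102, T3_120, T3_201, T3_210]
    abel
  have hBw0_2 : B 2 w0 = w0 := by
    rw [hw0def]
    simp only [map_add, map_sub, map_neg, hBinv, C2_0, C2_1, C2_2, C4_0, C4_1, C4_2,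
      T1_012, T1_021, T1_102, T1_120, T1_201, T1_210,
      T3_012, T3_021, T3_102, T3_120, T3_201, T3_210]
    abel
  have hBw0 : ∀ i, B i w0 = w0 := by
    intro i
    fin_cases i
    · exact hBw0_0
    · exact hBw0_1
    · exact hBw0_2
  have hBAw0_0 : B 0 (A 0 w0) = -(A 0 w0) := by
    rw [hw0def]
    simp only [map_add, map_sub, map_neg, hAinv, hBinv,
      T4_012, T4_021, T4_102, T4_120, T4_201, T4_210,
      T2_012, T2_021, T2_102, T2_120, T2_201, T2_210, C1_1, C1_2, C3_1, C3_2,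
      C2_0, C2_1, C2_2, C4_0, C4_1, C4_2,
      T1_012, T1_021, T1_102, T1_120, T1_201, T1_210,
      T3_012, T3_021, T3_102, T3_120, T3_201, T3_210]
    abel
  have hBAw0_1 : B 1 (A 1 w0) = -(A 1 w0) := by
    rw [hw0def]
    simp only [map_add, map_sub, map_neg, hAinv, hBinv,
      T4_012, T4_021, T4_102, T4_120, T4_201, T4_210,
      T2_012, T2_021, T2_102, T2_120, T2_201, T2_210, C1_1, C1_2, C3_1, C3_2,
      C2_0, C2_1, C2_2, C4_0, C4_1, C4_2,
      T1_012, T1_021, T1_102, T1_120, T1_201, T1_210,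
      T3_012, T3_021, T3_102, T3_120, T3_201, T3_210]
    abel
  have hBAw0_2 : B 2 (A 2 w0) = -(A 2 w0) := by
    rw [hw0def]
    simp only [map_add, map_sub, map_neg, hAinv, hBinv,
      T4_012, T4_021, T4_102, T4_120, T4_201, T4_210,
      T2_012, T2_021, T2_102, T2_120, T2_201, T2_210, C1_1, C1_2, C3_1, C3_2,
      C2_0, C2_1, C2_2, C4_0, C4_1, C4_2,
      T1_012, T1_021, T1_102, T1_120, T1_201, T1_210,
      T3_012, T3_021, T3_102, T3_120, T3_201, T3_210]
    abel
  have hBAw0 : ∀ i, B i (A i w0) = -(A i w0) := by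
    intro i
    fin_cases i
    · exact hBAw0_0
    · exact hBAw0_1
    · exact hBAw0_2
  have hSw : ⟪ψ, w0⟫ = 1 := by
    rw [hw0def]
    simp only [inner_add_right, inner_sub_right, ta0, ta1, ta2, tb0, tb1, tb2, tc, hpsi1]
    norm_num
  have hb0w : ⟪B 0 ψ, w0⟫ = 1 := by rw [hBsa 0, hBw0 0]; exact hSw
  have hb1w : ⟪B 1 ψ, w0⟫ = 1 := by rw [hBsa 1, hBw0 1]; exact hSw
  have hb2w : ⟪B 2 ψ, w0⟫ = 1 := by rw [hBsa 2, hBw0 2]; exact hSw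
  have haw0 : ⟪A 0 ψ, w0⟫ = 1 := by
    have h' : ⟪B 1 (A 0 ψ), w0⟫ = ⟪A 0 ψ, w0⟫ := by rw [hBsa 1, hBw0 1]
    rw [← h', T3_012]; exact hb2w
  have haw1 : ⟪A 1 ψ, w0⟫ = 1 := by
    have h' : ⟪B 2 (A 1 ψ), w0⟫ = ⟪A 1 ψ, w0⟫ := by rw [hBsa 2, hBw0 2]
    rw [← h', T3_120]; exact hb0w
  have haw2 : ⟪A 2 ψ, w0⟫ = 1 := by
    have h' : ⟪B 0 (A 2 ψ), w0⟫ = ⟪A 2 ψ, w0⟫ := by rw [hBsa 0, hBw0 0]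
    rw [← h', T3_201]; exact hb1w
  have hcw : ⟪A 0 (B 0 ψ), w0⟫ = -1 := by
    rw [hAsa 0, hBsa 0, hBAw0 0, inner_neg_right, ← hAsa 0, haw0]
  have hw0w0 : ⟪w0, w0⟫ = 8 := by
    nth_rewrite 1 [hw0def]
    simp only [inner_add_left, inner_sub_left, hSw, haw0, haw1, haw2, hb0w, hb1w, hb2w, hcw]
    norm_num
  -- normalisation
  set σ : ℂ := (((Real.sqrt 8 : ℝ) : ℂ))⁻¹ with hσdef
  have h8 : ((Real.sqrt 8 : ℝ) : ℂ) * ((Real.sqrt 8 : ℝ) : ℂ) = 8 := by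
    norm_cast
    rw [Real.mul_self_sqrt] <;> norm_num
  have hs8ne : ((Real.sqrt 8 : ℝ) : ℂ) ≠ 0 := by
    have : (0:ℝ) < Real.sqrt 8 := Real.sqrt_pos.mpr (by norm_num)
    exact_mod_cast this.ne'
  have hσconj : (starRingEnd ℂ) σ = σ := by
    rw [hσdef, map_inv₀, Complex.conj_ofReal]
  have hσ8 : (starRingEnd ℂ) σ * (σ * 8) = 1 := by
    rw [hσconj, hσdef, ← h8]
    field_simp
  set w : H := σ • w0 with hwdef
  have hBw : ∀ i, B i w = w := by
    intro i; rw [hwdef, map_smul, hBw0]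
  have hBAw : ∀ i, B i (A i w) = -(A i w) := by
    intro i; rw [hwdef, map_smul, map_smul, hBAw0, smul_neg]
  have hww : ⟪w, w⟫ = 1 := by
    rw [hwdef, inner_smul_left, inner_smul_right, hw0w0]
    exact hσ8
  -- Stage 4 : orthonormality of the `uvec` family
  have hw_u : ∀ k : Fin 3 → Fin 2, ⟪w, uvec A w k⟫ = if k = (fun _ => 0) then 1 else 0 := by
    intro k
    by_cases hk : k = (fun _ => 0)
    · rw [if_pos hk, hk]
      show ⟪w, Apow A 0 0 (Apow A 1 0 (Apow A 2 0 w))⟫ = 1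
      rw [apow_zero, apow_zero, apow_zero]; exact hww
    · rw [if_neg hk]
      obtain ⟨i, hi⟩ : ∃ i, k i = 1 := by
        by_contra hcon
        push_neg at hcon
        exact hk (funext fun l => by have := hcon l; omega)
      have e0 : ⟪B i w, uvec A w k⟫ = ⟪w, uvec A w k⟫ := by rw [hBw i]
      have e1 : ⟪B i w, uvec A w k⟫ = -⟪w, uvec A w k⟫ := by
        rw [hBsa i, uvec_B hAA hAB hBw hBAw i k, hi, inner_smul_right]
        simp
      have := e0.symm.trans e1
      linear_combination this / 2
  have hred : ∀ g h : Fin 3 → Fin 2,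
      ⟪uvec A w g, uvec A w h⟫ = ⟪w, uvec A w (fun l => h l + g l)⟫ := by
    intro g h
    show ⟪Apow A 0 (g 0) _, _⟫ = _
    rw [apow_adj hAsa, apow_adj hAsa, apow_adj hAsa,
      uvec_apow hAinv hAA, uvec_apow hAinv hAA, uvec_apow hAinv hAA]
    refine congrArg (fun k => (inner ℂ w (uvec A w k) : ℂ)) ?_
    funext l
    fin_cases l <;> simp [Function.update]
  have horth : ∀ g h : Fin 3 → Fin 2,
      ⟪uvec A w g, uvec A w h⟫ = if g = h then 1 else 0 := by
    intro g h
    rw [hred g h, hw_u]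
    have hiff : ((fun l => h l + g l) = (fun _ => 0 : Fin 3 → Fin 2)) ↔ g = h := by
      rw [funext_iff, funext_iff]
      exact forall_congr' fun l => fin2_add_eq_zero_iff (h l) (g l)
    by_cases hgh : g = h
    · rw [if_pos (hiff.mpr hgh), if_pos hgh]
    · rw [if_neg (fun hh => hgh (hiff.mp hh)), if_neg hgh]
  -- Stage 5 : membership in V
  have hVA' : ∀ i : Fin 3, (i = 0 ∨ i = 1 ∨ i = 2) → ∀ x ∈ V, A i x ∈ V := by
    rintro i (rfl | rfl | rfl) x hx <;>
    · rw [hV] at hx ⊢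
      refine Submodule.span_induction ?_ (by rw [map_zero]; exact Submodule.zero_mem _) ?_ ?_ hx
      · intro z hz
        simp only [Set.mem_insert_iff, Set.mem_singleton_iff] at hz
        rcases hz with rfl|rfl|rfl|rfl|rfl|rfl|rfl|rfl <;>
          (try simp only [hAinv, T4_012, T4_021, T4_102, T4_120, T4_201, T4_210,
            T2_012, T2_021, T2_102, T2_120, T2_201, T2_210, C1_1, C1_2, C3_1, C3_2]) <;>
          (try rw [Submodule.neg_mem_iff]) <;>
          exact Submodule.subset_span (by simp)
      · intro a b _ _ ha hb; rw [map_add]; exact Submodule.add_mem _ ha hb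
      · intro r a _ ha; rw [map_smul]; exact Submodule.smul_mem _ _ ha
  have hVA : ∀ i, ∀ x ∈ V, A i x ∈ V := fun i => hVA' i (by omega)
  have hmemgen : ∀ z ∈ ({ψ, A 0 ψ, A 1 ψ, A 2 ψ, B 0 ψ, B 1 ψ, B 2 ψ,
      A 0 (B 0 ψ)} : Set H), z ∈ V := fun z hz => hV ▸ Submodule.subset_span hz
  have hw0V : w0 ∈ V := by
    rw [hw0def]
    exact Submodule.sub_mem _
      (Submodule.add_mem _
        (Submodule.add_mem _
          (Submodule.add_mem _
            (Submodule.add_mem _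
              (Submodule.add_mem _
                (Submodule.add_mem _ (hmemgen _ (by simp)) (hmemgen _ (by simp)))
                (hmemgen _ (by simp)))
              (hmemgen _ (by simp)))
            (hmemgen _ (by simp)))
          (hmemgen _ (by simp)))
        (hmemgen _ (by simp)))
      (hmemgen _ (by simp))
  have hwV : w ∈ V := by rw [hwdef]; exact Submodule.smul_mem _ _ hw0V
  have hapV : ∀ i (e : Fin 2) (x : H), x ∈ V → Apow A i e x ∈ V := by
    intro i e x hx
    rcases (by omega : e = 0 ∨ e = 1) with rfl | rfl
    · simpa using hx
    · simpa using hVA i x hx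
  have huV : ∀ g, uvec A w g ∈ V := fun g =>
    hapV _ _ _ (hapV _ _ _ (hapV _ _ _ hwV))
  -- Stage 6 : dimension count
  have hfinV : FiniteDimensional ℂ V := by
    rw [hV]
    exact FiniteDimensional.span_of_finite ℂ (Set.toFinite _)
  have honH : Orthonormal ℂ (uvec A w) := by
    rw [orthonormal_iff_ite]
    exact horth
  have hcard8 : Fintype.card (Fin 3 → Fin 2) = 8 := by
    rw [Fintype.card_fun]
    norm_num
  have hle : Module.finrank ℂ V ≤ 8 := by
    set F : Fin 8 → H := ![ψ, A 0 ψ, A 1 ψ, A 2 ψ, B 0 ψ, B 1 ψ, B 2 ψ, A 0 (B 0 ψ)] with hF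
    have hsub : ({ψ, A 0 ψ, A 1 ψ, A 2 ψ, B 0 ψ, B 1 ψ, B 2 ψ, A 0 (B 0 ψ)} : Set H)
        ⊆ Set.range F := by
      intro z hz
      simp only [Set.mem_insert_iff, Set.mem_singleton_iff] at hz
      rcases hz with rfl|rfl|rfl|rfl|rfl|rfl|rfl|rfl
      exacts [⟨0, rfl⟩, ⟨1, rfl⟩, ⟨2, rfl⟩, ⟨3, rfl⟩, ⟨4, rfl⟩, ⟨5, rfl⟩, ⟨6, rfl⟩, ⟨7, rfl⟩]
    have hfinR : FiniteDimensional ℂ (Submodule.span ℂ (Set.range F)) :=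
      FiniteDimensional.span_of_finite ℂ (Set.finite_range F)
    have hmono : V ≤ Submodule.span ℂ (Set.range F) := by
      rw [hV]; exact Submodule.span_le.mpr (hsub.trans Submodule.subset_span)
    have hcardle : Module.finrank ℂ (Submodule.span ℂ (Set.range F)) ≤ 8 := by
      have := finrank_range_le_card (R := ℂ) F
      rw [Fintype.card_fin] at this
      exact this
    exact (Submodule.finrank_mono hmono).trans hcardle
  have hspan_le : Submodule.span ℂ (Set.range (uvec A w)) ≤ V :=
    Submodule.span_le.mpr (Set.range_subset_iff.mpr huV)
  have h8span : Module.finrank ℂ (Submodule.span ℂ (Set.range (uvec A w))) = 8 := by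
    rw [finrank_span_eq_card honH.linearIndependent, hcard8]
  have hge : 8 ≤ Module.finrank ℂ V := h8span ▸ Submodule.finrank_mono hspan_le
  have hfr : Module.finrank ℂ V = 8 := le_antisymm hle hge
  have hVB : ∀ i, ∀ x ∈ V, B i x ∈ V := by
    have hVspan : Submodule.span ℂ (Set.range (uvec A w)) = V :=
      Submodule.eq_of_le_of_finrank_le hspan_le (by rw [hfr, h8span])
    intro i x hx
    rw [← hVspan] at hx ⊢
    refine Submodule.span_induction ?_ (by rw [map_zero]; exact Submodule.zero_mem _) ?_ ?_ hx
    · rintro z ⟨g, rfl⟩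
      rw [uvec_B hAA hAB hBw hBAw i g]
      exact Submodule.smul_mem _ _ (Submodule.subset_span ⟨g, rfl⟩)
    · intro a b _ _ ha hb; rw [map_add]; exact Submodule.add_mem _ ha hb
    · intro r a _ ha; rw [map_smul]; exact Submodule.smul_mem _ _ ha
  -- Stage 7 : the orthonormal basis and the isometry
  have honV : Orthonormal ℂ (fun g => (⟨uvec A w g, huV g⟩ : V)) := by
    rw [orthonormal_iff_ite]
    intro g h
    rw [Submodule.coe_inner]
    exact horth g h
  have hcardV : Fintype.card (Fin 3 → Fin 2) = Module.finrank ℂ V := by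
    rw [hfr, hcard8]
  let bV : Module.Basis (Fin 3 → Fin 2) ℂ V :=
    basisOfLinearIndependentOfCardEqFinrank honV.linearIndependent hcardV
  have hsp : ⊤ ≤ Submodule.span ℂ (Set.range (fun g => (⟨uvec A w g, huV g⟩ : V))) := by
    have := bV.span_eq
    rw [coe_basisOfLinearIndependentOfCardEqFinrank] at this
    exact this.ge
  let onb : OrthonormalBasis (Fin 3 → Fin 2) ℂ V := OrthonormalBasis.mk honV hsp
  have honb : ∀ g, onb g = (⟨uvec A w g, huV g⟩ : V) := fun g => by
    simp [onb, OrthonormalBasis.coe_mk]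
  refine ⟨hfr, onb.repr, ?_⟩
  intro v hv i hAv hBv
  -- linear-map identities on the basis
  have keyA : onb.repr.toLinearEquiv.toLinearMap ∘ₗ ((A i : H →ₗ[ℂ] H).restrict (hVA i))
      = (Matrix.toEuclideanLin (tensorFactor 3 PauliX i)) ∘ₗ
        onb.repr.toLinearEquiv.toLinearMap := by
    apply onb.toBasis.ext
    intro g
    simp only [LinearMap.coe_comp, Function.comp_apply, OrthonormalBasis.coe_toBasis,
      LinearEquiv.coe_toLinearMap, LinearIsometryEquiv.coe_toLinearEquiv]
    have hrg : ((A i : H →ₗ[ℂ] H).restrict (hVA i)) (onb g) = onb (bflip i g) := by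
      apply Subtype.ext
      rw [honb g, honb (bflip i g)]
      show A i (uvec A w g) = uvec A w (bflip i g)
      exact uvec_A hAinv hAA i g
    rw [hrg, OrthonormalBasis.repr_self, OrthonormalBasis.repr_self, mulX]
  have keyB : onb.repr.toLinearEquiv.toLinearMap ∘ₗ ((B i : H →ₗ[ℂ] H).restrict (hVB i))
      = (Matrix.toEuclideanLin (tensorFactor 3 PauliZ i)) ∘ₗ
        onb.repr.toLinearEquiv.toLinearMap := by
    apply onb.toBasis.ext
    intro g
    simp only [LinearMap.coe_comp, Function.comp_apply, OrthonormalBasis.coe_toBasis,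
      LinearEquiv.coe_toLinearMap, LinearIsometryEquiv.coe_toLinearEquiv]
    have hrg : ((B i : H →ₗ[ℂ] H).restrict (hVB i)) (onb g)
        = ((-1 : ℂ)) ^ ((g i : ℕ)) • onb g := by
      apply Subtype.ext
      rw [honb g]
      show B i (uvec A w g) = _
      rw [uvec_B hAA hAB hBw hBAw i g]
      rfl
    rw [hrg, map_smul, OrthonormalBasis.repr_self, mulZ]
  constructor
  · have h' := LinearMap.congr_fun keyA ⟨v, hv⟩
    simp only [LinearMap.coe_comp, Function.comp_apply,
      LinearEquiv.coe_toLinearMap, LinearIsometryEquiv.coe_toLinearEquiv] at h'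
    have hx : ((A i : H →ₗ[ℂ] H).restrict (hVA i)) ⟨v, hv⟩ = ⟨A i v, hAv⟩ :=
      Subtype.ext rfl
    rw [hx] at h'
    exact h'
  · have h' := LinearMap.congr_fun keyB ⟨v, hv⟩
    simp only [LinearMap.coe_comp, Function.comp_apply,
      LinearEquiv.coe_toLinearMap, LinearIsometryEquiv.coe_toLinearEquiv] at h'
    have hx : ((B i : H →ₗ[ℂ] H).restrict (hVB i)) ⟨v, hv⟩ = ⟨B i v, hBv⟩ :=
      Subtype.ext rfl
    rw [hx] at h'
    exact h'
end
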